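/- arXiv:0804.4505 — 4 statements merged into one kernel-verified Lean document; each statement's English description precedes it below -/
import Mathlib

section
/- Let d ≥ 2. There exists a constant C = C(d) > 0, independent of q, such that for every finite field F_q of odd characteristic, every non-degenerate quadratic form Q on F_q^d, every j ∈ F_q \ {0}, and every subset E ⊆ S_j with #E ≥ q^{(d+1)/2}, one has ‖(χ_E dσ)^∨‖_{L^4(F_q^d, dm)} ≤ C · (#E / #S_j)^{3/4}, where χ_E is the characteristic function of E (note (#E / #S_j)^{3/4} = ‖χ_E‖_{L^{4/3}(S_j, dσ)}). -/
open Finset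

/-- The non-degenerate quadratic surface `S_j = {x ∈ F^d : Q(x) = j}`,
where `Q(x) = ∑_{i,k} a i k * x i * x k`. -/
def Surf {F : Type} [Field F] [Fintype F] [DecidableEq F] {d : ℕ}
    (a : Matrix (Fin d) (Fin d) F) (j : F) : Finset (Fin d → F) :=
  Finset.univ.filter fun x => (∑ i, ∑ k, a i k * x i * x k) = j

/-- The extension (inverse Fourier) transform `(f dσ)^∨(m) = (1/#S_j) ∑_{x ∈ S_j} χ(-x·m) f(x)`. -/
noncomputable def extFT {F : Type} [Field F] [Fintype F] [DecidableEq F] {d : ℕ}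
    (a : Matrix (Fin d) (Fin d) F) (j : F) (χ : F → ℂ) (f : (Fin d → F) → ℂ)
    (m : Fin d → F) : ℂ :=
  ((Surf a j).card : ℂ)⁻¹ * ∑ x ∈ Surf a j, χ (-(∑ i, x i * m i)) * f x

/-- `L^r` norm with counting measure on the frequency space `F^d`. -/
noncomputable def LrNorm {F : Type} [Fintype F] {d : ℕ}
    (r : ℝ) (g : (Fin d → F) → ℂ) : ℝ :=
  (∑ m : Fin d → F, ‖g m‖ ^ r) ^ (1 / r)

/-- `L^p` norm with normalized surface measure `dσ` on `S_j`. -/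
noncomputable def LpNormS {F : Type} [Field F] [Fintype F] [DecidableEq F] {d : ℕ}
    (a : Matrix (Fin d) (Fin d) F) (j : F) (p : ℝ) (f : (Fin d → F) → ℂ) : ℝ :=
  (((Surf a j).card : ℝ)⁻¹ * ∑ x ∈ Surf a j, ‖f x‖ ^ p) ^ (1 / p)


section AuxLemmas
set_option linter.unusedSectionVars false

variable {F : Type} [Field F] [Fintype F] [DecidableEq F] {d : ℕ}

private lemma orth1 (ψ : AddChar F ℂ) (hψ : ψ ≠ 0) (c : F) (hc : c ≠ 0) :
    ∑ t : F, ψ (t * c) = 0 := by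
  have := AddChar.sum_eq_zero_iff_ne_zero.mpr hψ
  rw [← this]
  exact Fintype.sum_equiv (Equiv.mulRight₀ c hc) _ _ (fun t => rfl)

private lemma orthd (ψ : AddChar F ℂ) (hψ : ψ ≠ 0) (u : Fin d → F) :
    ∑ m : Fin d → F, ψ (∑ i, u i * m i) = if u = 0 then ((Fintype.card F : ℂ))^d else 0 := by
  by_cases hu : u = 0
  · simp [hu, Finset.card_univ]
  · rw [if_neg hu]
    have hadd : ∀ m n : Fin d → F, ψ (∑ i, u i * (m + n) i) = ψ (∑ i, u i * m i) * ψ (∑ i, u i * n i) := by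
      intro m n
      rw [← AddChar.map_add_eq_mul, ← Finset.sum_add_distrib]
      congr 1; apply Finset.sum_congr rfl; intro i _; simp [Pi.add_apply, mul_add]
    set Φ : AddChar (Fin d → F) ℂ := ⟨fun m => ψ (∑ i, u i * m i), by simp, hadd⟩ with hΦ
    have hΦne : Φ ≠ 0 := by
      obtain ⟨i₀, hi₀⟩ : ∃ i, u i ≠ 0 := by
        by_contra h; push_neg at h; exact hu (funext h)
      obtain ⟨x, hx⟩ := AddChar.ne_zero_iff.mp hψ
      refine AddChar.ne_zero_iff.mpr ⟨fun k => if k = i₀ then (u i₀)⁻¹ * x else 0, ?_⟩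
      have : (∑ i, u i * (if i = i₀ then (u i₀)⁻¹ * x else 0)) = x := by
        rw [Finset.sum_eq_single i₀]
        · simp [mul_comm, hi₀, mul_assoc, mul_inv_cancel₀ hi₀]
          field_simp
        · intro b _ hb; simp [hb]
        · simp
      show ψ _ ≠ 1
      rw [this]; exact hx
    exact AddChar.sum_eq_zero_iff_ne_zero.mpr hΦne

private lemma master (ψ : AddChar F ℂ) (hψ : ψ ≠ 0) (E1 E2 E3 E4 : Finset (Fin d → F)) :
    ∑ m : Fin d → F, ((∑ x ∈ E1, ψ (∑ i, x i * m i)) * (∑ y ∈ E2, ψ (∑ i, y i * m i)) *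
      (∑ z ∈ E3, ψ (-∑ i, z i * m i)) * (∑ w ∈ E4, ψ (-∑ i, w i * m i)))
    = (Fintype.card F : ℂ)^d * ∑ w ∈ E4, ∑ z ∈ E3, ∑ y ∈ E2, ∑ x ∈ E1,
        (if x + y = z + w then 1 else 0) := by
  have key : ∀ m : Fin d → F, ((∑ x ∈ E1, ψ (∑ i, x i * m i)) * (∑ y ∈ E2, ψ (∑ i, y i * m i)) *
      (∑ z ∈ E3, ψ (-∑ i, z i * m i)) * (∑ w ∈ E4, ψ (-∑ i, w i * m i)))
      = ∑ w ∈ E4, ∑ z ∈ E3, ∑ y ∈ E2, ∑ x ∈ E1, ψ (∑ i, (x + y - z - w) i * m i) := by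
    intro m
    simp only [Finset.sum_mul, Finset.mul_sum]
    refine Finset.sum_congr rfl fun w _ => ?_
    refine Finset.sum_congr rfl fun z _ => ?_
    refine Finset.sum_congr rfl fun y _ => ?_
    refine Finset.sum_congr rfl fun x _ => ?_
    have harg : (∑ i, (x + y - z - w) i * m i)
        = (∑ i, x i * m i) + ((∑ i, y i * m i) + ((-∑ i, z i * m i) + (-∑ i, w i * m i))) := by
      simp only [Pi.add_apply, Pi.sub_apply, sub_mul, add_mul, Finset.sum_add_distrib,
        Finset.sum_sub_distrib]
      ring
    rw [harg, AddChar.map_add_eq_mul, AddChar.map_add_eq_mul, AddChar.map_add_eq_mul]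
    ring
  rw [Finset.sum_congr rfl fun m _ => key m]
  rw [Finset.sum_comm, Finset.mul_sum]
  refine Finset.sum_congr rfl fun w _ => ?_
  rw [Finset.sum_comm, Finset.mul_sum]
  refine Finset.sum_congr rfl fun z _ => ?_
  rw [Finset.sum_comm, Finset.mul_sum]
  refine Finset.sum_congr rfl fun y _ => ?_
  rw [Finset.sum_comm, Finset.mul_sum]
  refine Finset.sum_congr rfl fun x _ => ?_
  rw [orthd ψ hψ]
  simp only [sub_sub, sub_eq_zero]
  split_ifs <;> simp

private lemma master2 (ψ : AddChar F ℂ) (hψ : ψ ≠ 0) (E1 E2 : Finset (Fin d → F)) :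
    ∑ m : Fin d → F, ((∑ x ∈ E1, ψ (∑ i, x i * m i)) * (∑ z ∈ E2, ψ (-∑ i, z i * m i)))
    = (Fintype.card F : ℂ)^d * ∑ z ∈ E2, ∑ x ∈ E1, (if x = z then 1 else 0) := by
  have key : ∀ m : Fin d → F, ((∑ x ∈ E1, ψ (∑ i, x i * m i)) * (∑ z ∈ E2, ψ (-∑ i, z i * m i)))
      = ∑ z ∈ E2, ∑ x ∈ E1, ψ (∑ i, (x - z) i * m i) := by
    intro m
    simp only [Finset.sum_mul, Finset.mul_sum]
    refine Finset.sum_congr rfl fun z _ => ?_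
    refine Finset.sum_congr rfl fun x _ => ?_
    rw [← AddChar.map_add_eq_mul]
    congr 1
    simp only [Pi.sub_apply, sub_mul, Finset.sum_sub_distrib]
    ring
  rw [Finset.sum_congr rfl fun m _ => key m]
  rw [Finset.sum_comm, Finset.mul_sum]
  refine Finset.sum_congr rfl fun z _ => ?_
  rw [Finset.sum_comm, Finset.mul_sum]
  refine Finset.sum_congr rfl fun x _ => ?_
  rw [orthd ψ hψ]
  simp only [sub_eq_zero]
  split_ifs <;> simp

private lemma quad_expand (a : Matrix (Fin d) (Fin d) F) (hsym : ∀ i k, a i k = a k i)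
    (u y : Fin d → F) :
    (∑ i, ∑ k, a i k * (u + y) i * (u + y) k)
      = (∑ i, ∑ k, a i k * u i * u k) + (∑ i, ∑ k, a i k * y i * y k)
        + ∑ k, (2 * ∑ i, a i k * u i) * y k := by
  have e1 : (∑ i, ∑ k, a i k * (u + y) i * (u + y) k)
      = ∑ i, ∑ k, (a i k * u i * u k + a i k * y i * y k
          + (a i k * u i * y k + a i k * y i * u k)) := by
    refine Finset.sum_congr rfl fun i _ => Finset.sum_congr rfl fun k _ => ?_
    simp only [Pi.add_apply]; ring
  have e2 : (∑ i, ∑ k, a i k * y i * u k) = ∑ i, ∑ k, a i k * u i * y k := by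
    rw [Finset.sum_comm]
    exact Finset.sum_congr rfl fun i _ => Finset.sum_congr rfl fun k _ => by
      rw [hsym k i]; ring
  have e3 : ∑ k, (2 * ∑ i, a i k * u i) * y k
      = (∑ k, ∑ i, a i k * u i * y k) + ∑ k, ∑ i, a i k * u i * y k := by
    rw [← Finset.sum_add_distrib]
    refine Finset.sum_congr rfl fun k _ => ?_
    rw [Finset.mul_sum, Finset.sum_mul, ← Finset.sum_add_distrib]
    exact Finset.sum_congr rfl fun i _ => by ring
  rw [e1]
  simp only [Finset.sum_add_distrib]
  rw [e2, e3, Finset.sum_comm (f := fun i k => a i k * u i * y k)]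

private lemma gaussAbs (ψ : AddChar F ℂ) (hψ : ψ ≠ 0) (h2 : (2:F) ≠ 0)
    (a : Matrix (Fin d) (Fin d) F) (hsym : ∀ i k, a i k = a k i) (hdet : a.det ≠ 0)
    (t : F) (ht : t ≠ 0) (m : Fin d → F) :
    ‖∑ x : Fin d → F, ψ (t * (∑ i, ∑ k, a i k * x i * x k) - ∑ i, x i * m i)‖
      = Real.sqrt ((Fintype.card F : ℝ)^d) := by
  set q := Fintype.card F with hq
  set G : ℂ := ∑ x : Fin d → F, ψ (t * (∑ i, ∑ k, a i k * x i * x k) - ∑ i, x i * m i) with hG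
  have key : G * (starRingEnd ℂ) G = (q:ℂ)^d := by
    have hconjG : (starRingEnd ℂ) G = ∑ y : Fin d → F,
        ψ (-(t * (∑ i, ∑ k, a i k * y i * y k) - ∑ i, y i * m i)) := by
      rw [hG, map_sum]
      exact Finset.sum_congr rfl fun y _ => (AddChar.map_neg_eq_conj ψ _).symm
    rw [hconjG, Finset.mul_sum]
    have inner : ∀ y : Fin d → F,
        G * ψ (-(t * (∑ i, ∑ k, a i k * y i * y k) - ∑ i, y i * m i))
          = ∑ u : Fin d → F, (ψ (t * (∑ i, ∑ k, a i k * u i * u k) - ∑ i, u i * m i)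
              * ψ (∑ k, (2 * t * ∑ i, a i k * u i) * y k)) := by
      intro y
      rw [hG, Finset.sum_mul]
      rw [show (∑ x : Fin d → F, ψ (t * (∑ i, ∑ k, a i k * x i * x k) - ∑ i, x i * m i)
            * ψ (-(t * (∑ i, ∑ k, a i k * y i * y k) - ∑ i, y i * m i)))
          = ∑ u : Fin d → F, ψ (t * (∑ i, ∑ k, a i k * (u + y) i * (u + y) k) - ∑ i, (u + y) i * m i)
            * ψ (-(t * (∑ i, ∑ k, a i k * y i * y k) - ∑ i, y i * m i)) from
        (Fintype.sum_equiv (Equiv.addRight y) _ _ (fun u => rfl)).symm]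
      refine Finset.sum_congr rfl fun u _ => ?_
      rw [← AddChar.map_add_eq_mul, ← AddChar.map_add_eq_mul]
      congr 1
      rw [quad_expand a hsym u y]
      have h5 : ∑ i, (u + y) i * m i = (∑ i, u i * m i) + ∑ i, y i * m i := by
        rw [← Finset.sum_add_distrib]
        exact Finset.sum_congr rfl fun i _ => by simp [Pi.add_apply, add_mul]
      rw [h5]
      have h6 : ∑ k, (2 * t * ∑ i, a i k * u i) * y k = t * ∑ k, (2 * ∑ i, a i k * u i) * y k := by
        rw [Finset.mul_sum]
        exact Finset.sum_congr rfl fun k _ => by ring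
      rw [h6]
      ring
    rw [Finset.sum_congr rfl fun y _ => inner y]
    rw [Finset.sum_comm]
    have final : ∀ u : Fin d → F,
        (∑ y : Fin d → F, ψ (t * (∑ i, ∑ k, a i k * u i * u k) - ∑ i, u i * m i)
          * ψ (∑ k, (2 * t * ∑ i, a i k * u i) * y k))
        = if u = 0 then (ψ (t * (∑ i, ∑ k, a i k * u i * u k) - ∑ i, u i * m i)) * (q:ℂ)^d else 0 := by
      intro u
      rw [← Finset.mul_sum]
      rw [show (∑ y : Fin d → F, ψ (∑ k, (2 * t * ∑ i, a i k * u i) * y k))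
          = if (fun k => 2 * t * ∑ i, a i k * u i) = 0 then ((q:ℂ))^d else 0 from
        orthd ψ hψ _]
      have hiff : ((fun k => 2 * t * ∑ i, a i k * u i) = 0) ↔ u = 0 := by
        constructor
        · intro h
          have hv : Matrix.vecMul u a = 0 := by
            funext k
            have hk := congrFun h k
            simp only [Pi.zero_apply] at hk ⊢
            have h2t : (2:F) * t ≠ 0 := mul_ne_zero h2 ht
            have hsum : ∑ i, a i k * u i = 0 := by
              rcases mul_eq_zero.mp hk with h' | h'
              · exact absurd h' h2t
              · exact h'
            have hvk : Matrix.vecMul u a k = ∑ i, a i k * u i := by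
              simp [Matrix.vecMul, dotProduct, mul_comm]
            rw [hvk, hsum]
          have hu : u = Matrix.vecMul (Matrix.vecMul u a) a⁻¹ := by
            rw [Matrix.vecMul_vecMul, Matrix.mul_nonsing_inv a (isUnit_iff_ne_zero.mpr hdet), Matrix.vecMul_one]
          rw [hv] at hu
          rw [hu, Matrix.zero_vecMul]
        · intro h
          funext k
          simp [h]
      rw [if_congr hiff rfl rfl]
      split_ifs with h
      · rfl
      · exact mul_zero _
    rw [Finset.sum_congr rfl fun u _ => final u]
    rw [Finset.sum_ite_eq' Finset.univ (0 : Fin d → F)]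
    simp
  have hnormSq : Complex.normSq G = (q:ℝ)^d := by
    have h7 := key
    rw [Complex.mul_conj] at h7
    exact_mod_cast h7
  rw [Complex.norm_def, hnormSq]

private lemma surf_id (ψ : AddChar F ℂ) (hψ : ψ ≠ 0) (a : Matrix (Fin d) (Fin d) F) (j : F) (m : Fin d → F) :
    ∑ t : F, (ψ (-(t*j)) * ∑ x : Fin d → F, ψ (t * (∑ i, ∑ k, a i k * x i * x k) - ∑ i, x i * m i))
      = (Fintype.card F : ℂ) * ∑ x ∈ Surf a j, ψ (-∑ i, x i * m i) := by
  have step1 : ∀ t : F, (ψ (-(t*j)) * ∑ x : Fin d → F, ψ (t * (∑ i, ∑ k, a i k * x i * x k) - ∑ i, x i * m i))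
      = ∑ x : Fin d → F, ψ (t * ((∑ i, ∑ k, a i k * x i * x k) - j)) * ψ (-∑ i, x i * m i) := by
    intro t
    rw [Finset.mul_sum]
    refine Finset.sum_congr rfl fun x _ => ?_
    rw [← AddChar.map_add_eq_mul, ← AddChar.map_add_eq_mul]
    congr 1
    ring
  rw [Finset.sum_congr rfl fun t _ => step1 t, Finset.sum_comm]
  have step2 : ∀ x : Fin d → F, (∑ t : F, ψ (t * ((∑ i, ∑ k, a i k * x i * x k) - j)) * ψ (-∑ i, x i * m i))
      = (if (∑ i, ∑ k, a i k * x i * x k) = j then (Fintype.card F : ℂ) else 0) * ψ (-∑ i, x i * m i) := by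
    intro x
    rw [← Finset.sum_mul]
    congr 1
    by_cases hx : (∑ i, ∑ k, a i k * x i * x k) = j
    · rw [if_pos hx]
      simp [hx, sub_self]
    · rw [orth1 ψ hψ _ (sub_ne_zero.mpr hx), if_neg hx]
  rw [Finset.sum_congr rfl fun x _ => step2 x]
  rw [Surf, Finset.mul_sum, Finset.sum_filter]
  refine Finset.sum_congr rfl fun x _ => ?_
  split_ifs with h <;> simp

private lemma Bm_bound (ψ : AddChar F ℂ) (hψ : ψ ≠ 0) (h2 : (2:F) ≠ 0)
    (a : Matrix (Fin d) (Fin d) F) (hsym : ∀ i k, a i k = a k i) (hdet : a.det ≠ 0)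
    (j : F) (m : Fin d → F) (hm : m ≠ 0) :
    ‖∑ x ∈ Surf a j, ψ (-∑ i, x i * m i)‖ ≤ Real.sqrt ((Fintype.card F : ℝ)^d) := by
  set q := Fintype.card F with hq
  have hq0 : 0 < (q:ℝ) := by positivity
  have key := surf_id ψ hψ a j m
  rw [← Finset.sum_erase_add _ _ (Finset.mem_univ (0:F))] at key
  have hzero : (ψ (-((0:F)*j)) * ∑ x : Fin d → F, ψ ((0:F) * (∑ i, ∑ k, a i k * x i * x k) - ∑ i, x i * m i)) = 0 := by
    have h8 : ∀ x : Fin d → F, ((0:F) * (∑ i, ∑ k, a i k * x i * x k) - ∑ i, x i * m i) = ∑ i, (-m) i * x i := by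
      intro x
      rw [zero_mul, zero_sub, ← Finset.sum_neg_distrib]
      exact Finset.sum_congr rfl fun i _ => by simp only [Pi.neg_apply]; ring
    rw [Finset.sum_congr rfl fun x _ => congrArg ψ (h8 x)]
    rw [orthd ψ hψ (-m), if_neg (by simpa using hm)]
    rw [mul_zero]
  rw [hzero, add_zero] at key
  have habs : ‖(q:ℂ) * ∑ x ∈ Surf a j, ψ (-∑ i, x i * m i)‖
      ≤ (q:ℝ) * Real.sqrt ((q:ℝ)^d) := by
    rw [← key]
    calc ‖∑ t ∈ Finset.univ.erase (0:F), (ψ (-(t*j)) * ∑ x : Fin d → F, ψ (t * (∑ i, ∑ k, a i k * x i * x k) - ∑ i, x i * m i))‖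
        ≤ ∑ t ∈ Finset.univ.erase (0:F), ‖(ψ (-(t*j)) * ∑ x : Fin d → F, ψ (t * (∑ i, ∑ k, a i k * x i * x k) - ∑ i, x i * m i))‖ :=
          norm_sum_le _ _
      _ ≤ ∑ t ∈ Finset.univ.erase (0:F), Real.sqrt ((q:ℝ)^d) := by
          refine Finset.sum_le_sum fun t ht => ?_
          rw [norm_mul]
          rw [gaussAbs ψ hψ h2 a hsym hdet t (Finset.ne_of_mem_erase ht) m]
          rw [show ‖ψ (-(t*j))‖ = 1 from by
            exact AddChar.norm_apply ψ _, one_mul]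
      _ ≤ (q:ℝ) * Real.sqrt ((q:ℝ)^d) := by
          rw [Finset.sum_const, nsmul_eq_mul]
          have hcard : ((Finset.univ.erase (0:F)).card : ℝ) ≤ (q:ℝ) := by
            have h9 := Finset.card_erase_le (s := (Finset.univ : Finset F)) (a := (0:F))
            calc ((Finset.univ.erase (0:F)).card : ℝ) ≤ (Finset.univ.card : ℝ) := by exact_mod_cast h9
              _ = (q:ℝ) := by rw [Finset.card_univ]
          nlinarith [Real.sqrt_nonneg ((q:ℝ)^d)]
  rw [norm_mul, Complex.norm_natCast] at habs
  exact le_of_mul_le_mul_left habs hq0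

private lemma card_surf (ψ : AddChar F ℂ) (hψ : ψ ≠ 0) (h2 : (2:F) ≠ 0)
    (a : Matrix (Fin d) (Fin d) F) (hsym : ∀ i k, a i k = a k i) (hdet : a.det ≠ 0)
    (j : F) :
    ((Fintype.card F : ℝ))^d ≤ (Fintype.card F : ℝ) * ((Surf a j).card : ℝ)
      + (Fintype.card F : ℝ) * Real.sqrt ((Fintype.card F : ℝ)^d) := by
  set q := Fintype.card F with hq
  have key := surf_id ψ hψ a j 0
  rw [← Finset.sum_erase_add _ _ (Finset.mem_univ (0:F))] at key
  have hzero : (ψ (-((0:F)*j)) * ∑ x : Fin d → F, ψ ((0:F) * (∑ i, ∑ k, a i k * x i * x k) - ∑ i, x i * (0 : Fin d → F) i)) = ((q:ℂ))^d := by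
    have h1 : ∀ x : Fin d → F, ((0:F) * (∑ i, ∑ k, a i k * x i * x k) - ∑ i, x i * (0 : Fin d → F) i) = 0 := by
      intro x; simp
    rw [Finset.sum_congr rfl fun x _ => congrArg ψ (h1 x)]
    simp [Finset.card_univ, hq]
  have hB0 : (∑ x ∈ Surf a j, ψ (-∑ i, x i * (0 : Fin d → F) i)) = ((Surf a j).card : ℂ) := by
    simp
  rw [hzero, hB0] at key
  set R : ℂ := ∑ t ∈ Finset.univ.erase (0:F), (ψ (-(t*j)) * ∑ x : Fin d → F, ψ (t * (∑ i, ∑ k, a i k * x i * x k) - ∑ i, x i * (0 : Fin d → F) i)) with hR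
  have hRabs : ‖R‖ ≤ (q:ℝ) * Real.sqrt ((q:ℝ)^d) := by
    calc ‖R‖ ≤ ∑ t ∈ Finset.univ.erase (0:F), ‖(ψ (-(t*j)) * ∑ x : Fin d → F, ψ (t * (∑ i, ∑ k, a i k * x i * x k) - ∑ i, x i * (0 : Fin d → F) i))‖ := norm_sum_le _ _
      _ ≤ ∑ t ∈ Finset.univ.erase (0:F), Real.sqrt ((q:ℝ)^d) := by
          refine Finset.sum_le_sum fun t ht => ?_
          rw [norm_mul]
          rw [gaussAbs ψ hψ h2 a hsym hdet t (Finset.ne_of_mem_erase ht) 0]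
          rw [show ‖ψ (-(t*j))‖ = 1 from by
            exact AddChar.norm_apply ψ _, one_mul]
      _ ≤ (q:ℝ) * Real.sqrt ((q:ℝ)^d) := by
          rw [Finset.sum_const, nsmul_eq_mul]
          have hcard : ((Finset.univ.erase (0:F)).card : ℝ) ≤ (q:ℝ) := by
            have h9 := Finset.card_erase_le (s := (Finset.univ : Finset F)) (a := (0:F))
            calc ((Finset.univ.erase (0:F)).card : ℝ) ≤ (Finset.univ.card : ℝ) := by exact_mod_cast h9
              _ = (q:ℝ) := by rw [Finset.card_univ]
          nlinarith [Real.sqrt_nonneg ((q:ℝ)^d)]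
  have hqd : ((q:ℝ))^d = ‖(q:ℂ) * ((Surf a j).card : ℂ) - R‖ := by
    rw [show (q:ℂ) * ((Surf a j).card : ℂ) - R = ((q:ℂ))^d from by rw [← key]; ring]
    rw [show ((q:ℂ))^d = (((q:ℝ)^d : ℝ) : ℂ) from by push_cast; ring]
    rw [Complex.norm_real, Real.norm_eq_abs, abs_of_nonneg (by positivity)]
  calc ((q:ℝ))^d = ‖(q:ℂ) * ((Surf a j).card : ℂ) - R‖ := hqd
    _ ≤ ‖(q:ℂ) * ((Surf a j).card : ℂ)‖ + ‖R‖ := by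
        rw [sub_eq_add_neg]
        refine le_trans (norm_add_le _ _) ?_
        rw [norm_neg]
    _ ≤ (q:ℝ) * ((Surf a j).card : ℝ) + (q:ℝ) * Real.sqrt ((q:ℝ)^d) := by
        rw [norm_mul, Complex.norm_natCast, Complex.norm_natCast]
        exact add_le_add le_rfl hRabs

end AuxLemmas

set_option maxHeartbeats 3200000 in
/-- Theorem: restricted extension estimate for big sets `E ⊆ S_j` with
`#E ≥ q^{(d+1)/2}`: `‖(χ_E dσ)^∨‖_{L^4} ≲ (#E/#S_j)^{3/4}`. -/
theorem stmt3 (d : ℕ) (hd : 2 ≤ d) :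
    ∃ C : ℝ, 0 < C ∧
      ∀ (F : Type) [Field F] [Fintype F] [DecidableEq F],
        Odd (ringChar F) →
        ∀ χ : F → ℂ, χ 0 = 1 → (∀ x y : F, χ (x + y) = χ x * χ y) → (∃ x : F, χ x ≠ 1) →
        ∀ a : Matrix (Fin d) (Fin d) F, (∀ i k, a i k = a k i) → a.det ≠ 0 →
        ∀ j : F, j ≠ 0 →
        ∀ E : Finset (Fin d → F), E ⊆ Surf a j →
          (Fintype.card F : ℝ) ^ (((d : ℝ) + 1) / 2) ≤ (E.card : ℝ) →
          LrNorm 4 (extFT a j χ (fun x => if x ∈ E then 1 else 0))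
            ≤ C * ((E.card : ℝ) / ((Surf a j).card : ℝ)) ^ ((3 : ℝ) / 4) := by
  classical
  refine ⟨2, by norm_num, ?_⟩
  intro F _ _ _ hodd χ hχ0 hχadd hχnt a hsym hdet j hj E hE hcard
  set ψ : AddChar F ℂ := ⟨χ, hχ0, hχadd⟩ with hψdef
  have hψ : ψ ≠ 0 := AddChar.ne_zero_iff.mpr hχnt
  set q := Fintype.card F with hqdef
  -- basic facts about q
  have hp : (ringChar F).Prime := CharP.char_is_prime F (ringChar F)
  obtain ⟨n, hpn, hcardq⟩ := FiniteField.card F (ringChar F)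
  have hqodd : Odd q := by rw [hqdef, hcardq]; exact hodd.pow
  have hq2 : 1 < q := Fintype.one_lt_card
  have hq3 : 3 ≤ q := by rcases hqodd with ⟨k, hk⟩; omega
  have h2F : (2:F) ≠ 0 := by
    intro h
    have hdvd : ringChar F ∣ 2 := (CharP.cast_eq_zero_iff F (ringChar F) 2).mp (by exact_mod_cast h)
    have h22 : ringChar F = 2 := (Nat.prime_dvd_prime_iff_eq hp Nat.prime_two).mp hdvd
    rw [h22] at hodd
    simp [Nat.odd_iff] at hodd
  have hq0 : (0:ℝ) < (q:ℝ) := by positivity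
  have hq1 : (1:ℝ) ≤ (q:ℝ) := by exact_mod_cast le_of_lt hq2
  set N := (Surf a j).card with hNdef
  set e := E.card with hedef
  have hepos : 0 < e := by
    have h1 : (0:ℝ) < (e:ℝ) := lt_of_lt_of_le (by positivity) hcard
    exact_mod_cast h1
  have heN : e ≤ N := Finset.card_le_card hE
  have hNpos : 0 < N := lt_of_lt_of_le hepos heN
  have hNR : (0:ℝ) < (N:ℝ) := by exact_mod_cast hNpos
  have heR : (0:ℝ) < (e:ℝ) := by exact_mod_cast hepos
  -- e^2 ≥ q^{d+1}
  have he2 : (q:ℝ)^(d+1) ≤ (e:ℝ) * (e:ℝ) := by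
    have h1 : ((q:ℝ) ^ (((d:ℝ)+1)/2)) * ((q:ℝ) ^ (((d:ℝ)+1)/2)) = (q:ℝ)^(d+1) := by
      rw [← Real.rpow_add hq0]
      rw [show ((d:ℝ)+1)/2 + ((d:ℝ)+1)/2 = ((d:ℝ)+1) by ring]
      rw [show ((d:ℝ)+1) = ((d+1 : ℕ) : ℝ) by push_cast; ring]
      rw [Real.rpow_natCast]
    rw [← h1]
    exact mul_le_mul hcard hcard (by positivity) (le_trans (by positivity) hcard)
  -- q^{d-1} ≤ 3N
  have hq3N : (q:ℝ)^(d-1) ≤ 3 * (N:ℝ) := by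
    rcases eq_or_lt_of_le hd with hd2 | hd3
    · have hd2' : d = 2 := hd2.symm
      subst hd2'
      have hq_le_e : (q:ℝ) ≤ (e:ℝ) := by
        refine le_trans ?_ hcard
        calc (q:ℝ) = (q:ℝ) ^ (1:ℝ) := (Real.rpow_one _).symm
          _ ≤ (q:ℝ) ^ ((((2:ℕ):ℝ)+1)/2) := Real.rpow_le_rpow_of_exponent_le hq1 (by norm_num)
      have heNR : (e:ℝ) ≤ (N:ℝ) := by exact_mod_cast heN
      calc (q:ℝ)^(2-1) = (q:ℝ) := by norm_num
        _ ≤ (e:ℝ) := hq_le_e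
        _ ≤ (N:ℝ) := heNR
        _ ≤ 3 * (N:ℝ) := by nlinarith
    · have hd3' : 3 ≤ d := hd3
      have hcs := card_surf ψ hψ h2F a hsym hdet j
      have hsqrt : Real.sqrt ((q:ℝ)^d) ≤ (2/3) * (q:ℝ)^(d-1) := by
        have h1 : ((q:ℝ)^d) ≤ ((2/3) * (q:ℝ)^(d-1))^2 := by
          have h2 : ((2/3) * (q:ℝ)^(d-1))^2 = (4/9) * (q:ℝ)^(2*(d-1)) := by
            rw [mul_pow, ← pow_mul]; ring
          rw [h2]
          have hexp : (q:ℝ)^(2*(d-1)) = (q:ℝ)^d * (q:ℝ)^(d-2) := by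
            rw [← pow_add]; congr 1; omega
          rw [hexp]
          have h3 : (3:ℝ) ≤ (q:ℝ)^(d-2) := by
            calc (3:ℝ) ≤ (q:ℝ) := by exact_mod_cast hq3
              _ = (q:ℝ)^1 := (pow_one _).symm
              _ ≤ (q:ℝ)^(d-2) := pow_le_pow_right₀ hq1 (by omega)
          nlinarith [pow_pos hq0 d]
        calc Real.sqrt ((q:ℝ)^d) ≤ Real.sqrt (((2/3) * (q:ℝ)^(d-1))^2) := Real.sqrt_le_sqrt h1
          _ = (2/3) * (q:ℝ)^(d-1) := Real.sqrt_sq (by positivity)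
      have hqd : (q:ℝ)^d = (q:ℝ) * (q:ℝ)^(d-1) := by
        rw [← pow_succ']
        congr 1; omega
      have h6 := mul_le_mul_of_nonneg_left hsqrt hq0.le
      have h7 : (q:ℝ) * (q:ℝ)^(d-1) ≤ (q:ℝ) * (N:ℝ) + (2/3) * ((q:ℝ) * (q:ℝ)^(d-1)) := by
        calc (q:ℝ) * (q:ℝ)^(d-1) = (q:ℝ)^d := hqd.symm
          _ ≤ (q:ℝ) * (N:ℝ) + (q:ℝ) * Real.sqrt ((q:ℝ)^d) := hcs
          _ ≤ (q:ℝ) * (N:ℝ) + (q:ℝ) * (2/3 * (q:ℝ)^(d-1)) := by linarith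
          _ = (q:ℝ) * (N:ℝ) + (2/3) * ((q:ℝ) * (q:ℝ)^(d-1)) := by ring
      have h8 : (q:ℝ) * (q:ℝ)^(d-1) ≤ (q:ℝ) * (3 * (N:ℝ)) := by linarith
      exact le_of_mul_le_mul_left h8 hq0
  -- the Fourier side
  set A : (Fin d → F) → ℂ := fun m => ∑ x ∈ E, ψ (-∑ i, x i * m i) with hA
  have hconj : ∀ m : Fin d → F, (starRingEnd ℂ) (A m) = ∑ x ∈ E, ψ (∑ i, x i * m i) := by
    intro m
    rw [show A m = ∑ x ∈ E, ψ (-∑ i, x i * m i) from rfl, map_sum]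
    refine Finset.sum_congr rfl fun x _ => ?_
    have h1 := AddChar.map_neg_eq_conj ψ (-(∑ i, x i * m i))
    rw [neg_neg] at h1
    exact h1.symm
  set T : ℝ := ∑ m : Fin d → F, ‖A m‖^4 with hT
  have hT0 : (0:ℝ) ≤ T := Finset.sum_nonneg fun m _ => by positivity
  -- Plancherel
  have hplan : ∑ m : Fin d → F, ‖A m‖^2 = (q:ℝ)^d * e := by
    have h1 := master2 ψ hψ E E
    have h2 : ∀ m : Fin d → F, ((∑ x ∈ E, ψ (∑ i, x i * m i)) * (∑ z ∈ E, ψ (-∑ i, z i * m i)))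
        = ((‖A m‖^2 : ℝ) : ℂ) := by
      intro m
      rw [← hconj m, show (∑ z ∈ E, ψ (-∑ i, z i * m i)) = A m from rfl]
      rw [mul_comm, Complex.mul_conj, Complex.normSq_eq_norm_sq]
    rw [Finset.sum_congr rfl fun m _ => h2 m] at h1
    have h3 : ∑ z ∈ E, ∑ x ∈ E, (if x = z then (1:ℂ) else 0) = (e:ℂ) := by
      have h4 : ∀ z ∈ E, (∑ x ∈ E, (if x = z then (1:ℂ) else 0)) = 1 := by
        intro z hz
        rw [Finset.sum_ite_eq' E z fun _ => (1:ℂ)]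
        exact if_pos hz
      rw [Finset.sum_congr rfl h4, Finset.sum_const, nsmul_eq_mul, mul_one, hedef]
    rw [h3] at h1
    have h5 : ((∑ m : Fin d → F, ‖A m‖^2 : ℝ) : ℂ) = (((q:ℝ)^d * e : ℝ) : ℂ) := by
      rw [Complex.ofReal_sum, h1]
      push_cast; ring
    exact_mod_cast h5
  -- energies
  set ΛE : ℝ := ∑ w ∈ E, ∑ z ∈ E, ∑ y ∈ E, ∑ x ∈ E, (if x + y = z + w then (1:ℝ) else 0) with hΛE
  set ΛS : ℝ := ∑ w ∈ Surf a j, ∑ z ∈ E, ∑ y ∈ E, ∑ x ∈ E, (if x + y = z + w then (1:ℝ) else 0) with hΛS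
  have hinner0 : ∀ w : Fin d → F, (0:ℝ) ≤ ∑ z ∈ E, ∑ y ∈ E, ∑ x ∈ E, (if x + y = z + w then (1:ℝ) else 0) := by
    intro w
    refine Finset.sum_nonneg fun z _ => Finset.sum_nonneg fun y _ => Finset.sum_nonneg fun x _ => ?_
    split_ifs <;> norm_num
  have hΛS0 : (0:ℝ) ≤ ΛS := Finset.sum_nonneg fun w _ => hinner0 w
  have hcompare : ΛE ≤ ΛS := Finset.sum_le_sum_of_subset_of_nonneg hE fun w _ _ => hinner0 w
  -- cast helper for the energy sums
  have hcastE : ∀ (W : Finset (Fin d → F)),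
      ∑ w ∈ W, ∑ z ∈ E, ∑ y ∈ E, ∑ x ∈ E, (if x + y = z + w then (1:ℂ) else 0)
      = (((∑ w ∈ W, ∑ z ∈ E, ∑ y ∈ E, ∑ x ∈ E, (if x + y = z + w then (1:ℝ) else 0) : ℝ)) : ℂ) := by
    intro W
    push_cast
    refine Finset.sum_congr rfl fun w _ => Finset.sum_congr rfl fun z _ =>
      Finset.sum_congr rfl fun y _ => Finset.sum_congr rfl fun x _ => ?_
    split_ifs <;> simp
  -- T = q^d ΛE
  have hTΛ : T = (q:ℝ)^d * ΛE := by
    have h1 := master ψ hψ E E E E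
    have h2 : ∀ m : Fin d → F, ((∑ x ∈ E, ψ (∑ i, x i * m i)) * (∑ y ∈ E, ψ (∑ i, y i * m i)) *
        (∑ z ∈ E, ψ (-∑ i, z i * m i)) * (∑ w ∈ E, ψ (-∑ i, w i * m i)))
        = ((‖A m‖^4 : ℝ) : ℂ) := by
      intro m
      rw [← hconj m, show (∑ z ∈ E, ψ (-∑ i, z i * m i)) = A m from rfl]
      rw [show (starRingEnd ℂ) (A m) * (starRingEnd ℂ) (A m) * A m * A m
          = (A m * (starRingEnd ℂ) (A m))^2 from by ring]
      rw [Complex.mul_conj, Complex.normSq_eq_norm_sq]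
      push_cast; ring
    rw [Finset.sum_congr rfl fun m _ => h2 m, hcastE E] at h1
    have h5 : ((T : ℝ) : ℂ) = (((q:ℝ)^d * ΛE : ℝ) : ℂ) := by
      rw [hT, Complex.ofReal_sum, h1, hΛE]
      push_cast; ring
    exact_mod_cast h5
  -- q^d ΛS bound
  have hS : (q:ℝ)^d * ΛS ≤ (e:ℝ)^3 * N + Real.sqrt ((q:ℝ)^d) * ∑ m : Fin d → F, ‖A m‖^3 := by
    have h1 := master ψ hψ E E E (Surf a j)
    rw [hcastE (Surf a j)] at h1
    have h2 : (q:ℝ)^d * ΛS = ‖(Fintype.card F : ℂ)^d *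
        ((((∑ w ∈ Surf a j, ∑ z ∈ E, ∑ y ∈ E, ∑ x ∈ E, (if x + y = z + w then (1:ℝ) else 0) : ℝ)) : ℂ))‖ := by
      rw [norm_mul, Complex.norm_real, Real.norm_eq_abs, ← hΛS, abs_of_nonneg hΛS0]
      congr 1
      rw [show ((Fintype.card F : ℂ))^d = (((q:ℝ)^d : ℝ) : ℂ) from by push_cast; ring]
      rw [Complex.norm_real, Real.norm_eq_abs, abs_of_nonneg (by positivity)]
    rw [h2, ← h1]
    rw [← Finset.sum_erase_add _ _ (Finset.mem_univ (0 : Fin d → F))]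
    have hf0 : ((∑ x ∈ E, ψ (∑ i, x i * (0 : Fin d → F) i)) * (∑ y ∈ E, ψ (∑ i, y i * (0 : Fin d → F) i)) *
        (∑ z ∈ E, ψ (-∑ i, z i * (0 : Fin d → F) i)) * (∑ w ∈ Surf a j, ψ (-∑ i, w i * (0 : Fin d → F) i)))
        = ((e:ℂ) * e * e * N) := by
      simp [Finset.sum_const, hedef, hNdef]
    calc ‖∑ m ∈ Finset.univ.erase (0 : Fin d → F),
          ((∑ x ∈ E, ψ (∑ i, x i * m i)) * (∑ y ∈ E, ψ (∑ i, y i * m i)) *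
           (∑ z ∈ E, ψ (-∑ i, z i * m i)) * (∑ w ∈ Surf a j, ψ (-∑ i, w i * m i)))
          + ((∑ x ∈ E, ψ (∑ i, x i * (0 : Fin d → F) i)) * (∑ y ∈ E, ψ (∑ i, y i * (0 : Fin d → F) i)) *
           (∑ z ∈ E, ψ (-∑ i, z i * (0 : Fin d → F) i)) * (∑ w ∈ Surf a j, ψ (-∑ i, w i * (0 : Fin d → F) i)))‖
        ≤ ‖∑ m ∈ Finset.univ.erase (0 : Fin d → F),
          ((∑ x ∈ E, ψ (∑ i, x i * m i)) * (∑ y ∈ E, ψ (∑ i, y i * m i)) *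
           (∑ z ∈ E, ψ (-∑ i, z i * m i)) * (∑ w ∈ Surf a j, ψ (-∑ i, w i * m i)))‖
          + ‖(∑ x ∈ E, ψ (∑ i, x i * (0 : Fin d → F) i)) * (∑ y ∈ E, ψ (∑ i, y i * (0 : Fin d → F) i)) *
           (∑ z ∈ E, ψ (-∑ i, z i * (0 : Fin d → F) i)) * (∑ w ∈ Surf a j, ψ (-∑ i, w i * (0 : Fin d → F) i))‖ :=
          norm_add_le _ _
      _ ≤ Real.sqrt ((q:ℝ)^d) * (∑ m : Fin d → F, ‖A m‖^3) + (e:ℝ)^3 * N := by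
          refine add_le_add ?_ ?_
          · calc ‖∑ m ∈ Finset.univ.erase (0 : Fin d → F),
                ((∑ x ∈ E, ψ (∑ i, x i * m i)) * (∑ y ∈ E, ψ (∑ i, y i * m i)) *
                 (∑ z ∈ E, ψ (-∑ i, z i * m i)) * (∑ w ∈ Surf a j, ψ (-∑ i, w i * m i)))‖
                ≤ ∑ m ∈ Finset.univ.erase (0 : Fin d → F), 
                 ‖(∑ x ∈ E, ψ (∑ i, x i * m i)) * (∑ y ∈ E, ψ (∑ i, y i * m i)) *
                   (∑ z ∈ E, ψ (-∑ i, z i * m i)) * (∑ w ∈ Surf a j, ψ (-∑ i, w i * m i))‖ :=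
                  norm_sum_le _ _
              _ ≤ ∑ m ∈ Finset.univ.erase (0 : Fin d → F), ‖A m‖^3 * Real.sqrt ((q:ℝ)^d) := by
                  refine Finset.sum_le_sum fun m hm => ?_
                  have hm0 : m ≠ 0 := Finset.ne_of_mem_erase hm
                  rw [norm_mul, norm_mul, norm_mul]
                  rw [← hconj m, show (∑ z ∈ E, ψ (-∑ i, z i * m i)) = A m from rfl]
                  rw [Complex.norm_conj]
                  have hBb := Bm_bound ψ hψ h2F a hsym hdet j m hm0
                  have hA0 : (0:ℝ) ≤ ‖A m‖ := norm_nonneg _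
                  calc ‖A m‖ * ‖A m‖ * ‖A m‖ *
                        ‖∑ w ∈ Surf a j, ψ (-∑ i, w i * m i)‖
                      ≤ ‖A m‖ * ‖A m‖ * ‖A m‖ * Real.sqrt ((q:ℝ)^d) := by
                        refine mul_le_mul_of_nonneg_left hBb (by positivity)
                    _ = ‖A m‖^3 * Real.sqrt ((q:ℝ)^d) := by ring
              _ = (∑ m ∈ Finset.univ.erase (0 : Fin d → F), ‖A m‖^3) * Real.sqrt ((q:ℝ)^d) := by
                  rw [Finset.sum_mul]
              _ ≤ (∑ m : Fin d → F, ‖A m‖^3) * Real.sqrt ((q:ℝ)^d) := by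
                  refine mul_le_mul_of_nonneg_right ?_ (Real.sqrt_nonneg _)
                  refine Finset.sum_le_sum_of_subset_of_nonneg (Finset.subset_univ _) fun m _ _ => by positivity
              _ = Real.sqrt ((q:ℝ)^d) * (∑ m : Fin d → F, ‖A m‖^3) := by ring
          · rw [hf0]
            rw [show ((e:ℂ) * e * e * N) = ((((e:ℝ)^3 * N : ℝ)) : ℂ) from by push_cast; ring]
            rw [Complex.norm_real, Real.norm_eq_abs, abs_of_nonneg (by positivity)]
      _ = (e:ℝ)^3 * N + Real.sqrt ((q:ℝ)^d) * ∑ m : Fin d → F, ‖A m‖^3 := by ring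
  -- Cauchy--Schwarz
  have hCS : (∑ m : Fin d → F, ‖A m‖^3) ≤ Real.sqrt ((q:ℝ)^d * e) * Real.sqrt T := by
    have h1 := Finset.sum_mul_sq_le_sq_mul_sq Finset.univ (fun m => ‖A m‖)
      (fun m => ‖A m‖^2)
    have h2 : (∑ m : Fin d → F, ‖A m‖^3)^2 ≤ ((q:ℝ)^d * e) * T := by
      calc (∑ m : Fin d → F, ‖A m‖^3)^2
          = (∑ m : Fin d → F, ‖A m‖ * ‖A m‖^2)^2 := by
            congr 1
            exact Finset.sum_congr rfl fun m _ => by ring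
        _ ≤ (∑ m : Fin d → F, ‖A m‖^2) * (∑ m : Fin d → F, (‖A m‖^2)^2) := h1
        _ = ((q:ℝ)^d * e) * T := by
            rw [hplan]
            congr 1
            rw [hT]
            exact Finset.sum_congr rfl fun m _ => by ring
    have h3 : (0:ℝ) ≤ ∑ m : Fin d → F, ‖A m‖^3 :=
      Finset.sum_nonneg fun m _ => by positivity
    calc (∑ m : Fin d → F, ‖A m‖^3)
        = Real.sqrt ((∑ m : Fin d → F, ‖A m‖^3)^2) := (Real.sqrt_sq h3).symm
      _ ≤ Real.sqrt (((q:ℝ)^d * e) * T) := Real.sqrt_le_sqrt h2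
      _ = Real.sqrt ((q:ℝ)^d * e) * Real.sqrt T := Real.sqrt_mul (by positivity) _
  -- quadratic inequality
  have hquad : T ≤ (e:ℝ)^3 * N + (Real.sqrt ((q:ℝ)^d) * Real.sqrt ((q:ℝ)^d * e)) * Real.sqrt T := by
    calc T = (q:ℝ)^d * ΛE := hTΛ
      _ ≤ (q:ℝ)^d * ΛS := by
          refine mul_le_mul_of_nonneg_left hcompare (by positivity)
      _ ≤ (e:ℝ)^3 * N + Real.sqrt ((q:ℝ)^d) * ∑ m : Fin d → F, ‖A m‖^3 := hS
      _ ≤ (e:ℝ)^3 * N + (Real.sqrt ((q:ℝ)^d) * Real.sqrt ((q:ℝ)^d * e)) * Real.sqrt T := by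
          rw [mul_assoc]
          exact add_le_add le_rfl (mul_le_mul_of_nonneg_left hCS (Real.sqrt_nonneg _))
  have hkey : T ≤ 2 * ((e:ℝ)^3 * N) + (q:ℝ)^d * ((q:ℝ)^d * e) := by
    set s := Real.sqrt T with hs
    set b0 := Real.sqrt ((q:ℝ)^d) * Real.sqrt ((q:ℝ)^d * e) with hb0
    have hs2 : s^2 = T := Real.sq_sqrt hT0
    have hb02 : b0^2 = (q:ℝ)^d * ((q:ℝ)^d * e) := by
      rw [hb0, mul_pow, Real.sq_sqrt (by positivity), Real.sq_sqrt (by positivity)]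
    have hs0 : (0:ℝ) ≤ s := Real.sqrt_nonneg _
    nlinarith [sq_nonneg (s - b0), hquad, hs2, hb02]
  -- arithmetic conclusion : T ≤ 16 e^3 N
  have harith : (q:ℝ)^d * ((q:ℝ)^d * e) ≤ (q:ℝ)^(d-1) * ((e:ℝ) * (e:ℝ) * (e:ℝ)) := by
    have h1 : (q:ℝ)^d * (q:ℝ)^d = (q:ℝ)^(d-1) * (q:ℝ)^(d+1) := by
      rw [← pow_add, ← pow_add]
      congr 1
      omega
    calc (q:ℝ)^d * ((q:ℝ)^d * e) = ((q:ℝ)^d * (q:ℝ)^d) * e := by ring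
      _ = (q:ℝ)^(d-1) * (q:ℝ)^(d+1) * e := by rw [h1]
      _ ≤ (q:ℝ)^(d-1) * ((e:ℝ) * (e:ℝ)) * e := by
          have h2 : (0:ℝ) ≤ (q:ℝ)^(d-1) := by positivity
          exact mul_le_mul_of_nonneg_right (mul_le_mul_of_nonneg_left he2 h2) heR.le
      _ = (q:ℝ)^(d-1) * ((e:ℝ) * (e:ℝ) * (e:ℝ)) := by ring
  have hT16 : T ≤ 16 * (e:ℝ)^3 * N := by
    have h1 : (q:ℝ)^(d-1) * ((e:ℝ) * (e:ℝ) * (e:ℝ)) ≤ 3 * (N:ℝ) * ((e:ℝ) * (e:ℝ) * (e:ℝ)) :=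
      mul_le_mul_of_nonneg_right hq3N (by positivity)
    nlinarith [hkey, harith, heR, hNR]
  -- final computation
  have hr4 : ∀ x : ℝ, 0 ≤ x → x ^ (4:ℝ) = x^(4:ℕ) := by
    intro x hx
    rw [show (4:ℝ) = ((4:ℕ):ℝ) by norm_num, Real.rpow_natCast]
  have hext : ∀ m : Fin d → F, extFT a j χ (fun x => if x ∈ E then 1 else 0) m = ((N:ℂ))⁻¹ * A m := by
    intro m
    rw [extFT]
    congr 1
    calc ∑ x ∈ Surf a j, χ (-(∑ i, x i * m i)) * (if x ∈ E then (1:ℂ) else 0)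
        = ∑ x ∈ Surf a j, (if x ∈ E then ψ (-∑ i, x i * m i) else 0) := by
          refine Finset.sum_congr rfl fun x _ => ?_
          split_ifs with h
          · rw [mul_one]; rfl
          · rw [mul_zero]
      _ = ∑ x ∈ Surf a j ∩ E, ψ (-∑ i, x i * m i) := Finset.sum_ite_mem _ _ _
      _ = A m := by rw [Finset.inter_eq_right.mpr hE]
  have habs : ∀ m : Fin d → F, ‖extFT a j χ (fun x => if x ∈ E then 1 else 0) m‖
      = ((N:ℝ))⁻¹ * ‖A m‖ := by
    intro m
    rw [hext m, norm_mul, norm_inv, Complex.norm_natCast]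
  have hsumeq : ∑ m : Fin d → F, ‖extFT a j χ (fun x => if x ∈ E then 1 else 0) m‖ ^ (4:ℝ)
      = (((N:ℝ))⁻¹)^(4:ℕ) * T := by
    rw [hT, Finset.mul_sum]
    refine Finset.sum_congr rfl fun m _ => ?_
    rw [habs m, hr4 _ (by positivity), mul_pow]
  rw [LrNorm, hsumeq]
  have h164 : (((N:ℝ))⁻¹)^(4:ℕ) * T ≤ 16 * ((e:ℝ)/(N:ℝ))^(3:ℕ) := by
    calc (((N:ℝ))⁻¹)^(4:ℕ) * T ≤ (((N:ℝ))⁻¹)^(4:ℕ) * (16 * (e:ℝ)^3 * N) :=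
          mul_le_mul_of_nonneg_left hT16 (by positivity)
      _ = 16 * ((e:ℝ)/(N:ℝ))^(3:ℕ) := by
          field_simp
  calc ((((N:ℝ))⁻¹)^(4:ℕ) * T) ^ (1/(4:ℝ)) ≤ (16 * ((e:ℝ)/(N:ℝ))^(3:ℕ)) ^ (1/(4:ℝ)) := by
        refine Real.rpow_le_rpow (by positivity) h164 (by norm_num)
    _ = 2 * ((e:ℝ)/(N:ℝ)) ^ ((3:ℝ)/4) := by
        rw [Real.mul_rpow (by norm_num) (by positivity)]
        congr 1
        · rw [show (16:ℝ) = 2^(4:ℕ) by norm_num, ← Real.rpow_natCast 2 4,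
            ← Real.rpow_mul (by norm_num)]
          norm_num
        · rw [← Real.rpow_natCast ((e:ℝ)/(N:ℝ)) 3, ← Real.rpow_mul (by positivity)]
          norm_num
end

section
/- (Salié sum bound) There exists an absolute constant C > 0 such that for every finite field F_q with q odd, every nontrivial additive character χ of F_q, the multiplicative character ψ of F_q^* of order two (the quadratic character), and all a, b ∈ F_q, one has |Σ_{t ∈ F_q^*} ψ(t) χ(a t + b t^{−1})| ≤ C q^{1/2}. -/
open Finset


set_option linter.unusedSectionVars false
section Salie

variable {F : Type} [Field F] [Fintype F] [DecidableEq F] {χ ψ : F → ℂ}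

lemma chi_mul_neg (hχ0 : χ 0 = 1) (hχm : ∀ x y : F, χ (x + y) = χ x * χ y) (x : F) :
    χ x * χ (-x) = 1 := by rw [← hχm, add_neg_cancel, hχ0]

lemma chi_ne_zero (hχ0 : χ 0 = 1) (hχm : ∀ x y : F, χ (x + y) = χ x * χ y) (x : F) :
    χ x ≠ 0 := left_ne_zero_of_mul_eq_one (chi_mul_neg hχ0 hχm x)

lemma chi_nsmul (hχ0 : χ 0 = 1) (hχm : ∀ x y : F, χ (x + y) = χ x * χ y) (n : ℕ) (x : F) :
    χ (n • x) = χ x ^ n := by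
  induction n with
  | zero => simpa using hχ0
  | succ n ih => rw [succ_nsmul, hχm, ih, pow_succ]

lemma chi_abs (hχ0 : χ 0 = 1) (hχm : ∀ x y : F, χ (x + y) = χ x * χ y) (x : F) :
    ‖χ x‖ = 1 := by
  have h1 : χ x ^ Fintype.card F = 1 := by
    rw [← chi_nsmul hχ0 hχm, card_nsmul_eq_zero, hχ0]
  have h2 : ‖χ x‖ ^ Fintype.card F = 1 := by
    rw [← norm_pow, h1, norm_one]
  have hc : Fintype.card F ≠ 0 := Fintype.card_ne_zero
  rcases pow_eq_one_iff_cases.mp h2 with h | h | h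
  · exact absurd h hc
  · exact h
  · nlinarith [norm_nonneg (χ x), h.1]

lemma chi_sum_zero (hχm : ∀ x y : F, χ (x + y) = χ x * χ y) (hnt : ∃ x : F, χ x ≠ 1) :
    ∑ x : F, χ x = 0 := by
  obtain ⟨x₀, hx₀⟩ := hnt
  have key : χ x₀ * ∑ x : F, χ x = ∑ x : F, χ x := by
    rw [Finset.mul_sum]
    simp_rw [← hχm]
    exact Fintype.sum_equiv (Equiv.addLeft x₀) _ _ (fun x => rfl)
  have : (χ x₀ - 1) * ∑ x : F, χ x = 0 := by ring_nf; linear_combination key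
  rcases mul_eq_zero.mp this with h | h
  · exact absurd (by linear_combination h) hx₀
  · exact h

lemma chi_sum_mul (hχ0 : χ 0 = 1) (hχm : ∀ x y : F, χ (x + y) = χ x * χ y)
    (hnt : ∃ x : F, χ x ≠ 1) (c : F) :
    ∑ x : F, χ (c * x) = if c = 0 then (Fintype.card F : ℂ) else 0 := by
  split_ifs with hc
  · simp [hc, hχ0]
  · rw [← chi_sum_zero hχm hnt]
    exact Fintype.sum_equiv (Equiv.mulLeft₀ c hc) _ _ (fun x => rfl)


lemma psi_eq (hψ : ∀ t : F, t ≠ 0 → ψ t = if ∃ s : F, s * s = t then 1 else -1)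
    {t : F} (ht : t ≠ 0) : ψ t = ((quadraticChar F t : ℤ) : ℂ) := by
  have hiff : (∃ s : F, s * s = t) ↔ IsSquare t :=
    ⟨fun ⟨s, hs⟩ => ⟨s, hs.symm⟩, fun ⟨s, hs⟩ => ⟨s, hs.symm⟩⟩
  rw [hψ t ht, quadraticChar_apply, quadraticCharFun, if_neg ht]
  by_cases h : IsSquare t
  · rw [if_pos (hiff.mpr h), if_pos h]; simp
  · rw [if_neg (fun hs => h (hiff.mp hs)), if_neg h]; simp

lemma psi_mul (hψ : ∀ t : F, t ≠ 0 → ψ t = if ∃ s : F, s * s = t then 1 else -1)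
    {s t : F} (hs : s ≠ 0) (ht : t ≠ 0) : ψ (s * t) = ψ s * ψ t := by
  rw [psi_eq hψ (mul_ne_zero hs ht), psi_eq hψ hs, psi_eq hψ ht, map_mul]
  push_cast; ring

lemma psi_sq (hψ : ∀ t : F, t ≠ 0 → ψ t = if ∃ s : F, s * s = t then 1 else -1)
    {t : F} (ht : t ≠ 0) : ψ t * ψ t = 1 := by
  rw [← psi_mul hψ ht ht, hψ _ (mul_ne_zero ht ht), if_pos ⟨t, rfl⟩]

lemma psi_inv (hψ : ∀ t : F, t ≠ 0 → ψ t = if ∃ s : F, s * s = t then 1 else -1)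
    {t : F} (ht : t ≠ 0) : ψ t⁻¹ = ψ t := by
  have h1 : ψ t⁻¹ * ψ t = 1 := by
    rw [← psi_mul hψ (inv_ne_zero ht) ht, inv_mul_cancel₀ ht,
      hψ 1 one_ne_zero, if_pos ⟨1, one_mul 1⟩]
  calc ψ t⁻¹ = ψ t⁻¹ * (ψ t * ψ t) := by rw [psi_sq hψ ht, mul_one]
  _ = (ψ t⁻¹ * ψ t) * ψ t := by ring
  _ = ψ t := by rw [h1, one_mul]

lemma psi_abs (hψ : ∀ t : F, t ≠ 0 → ψ t = if ∃ s : F, s * s = t then 1 else -1)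
    {t : F} (ht : t ≠ 0) : ‖ψ t‖ = 1 := by
  rw [hψ t ht]; split_ifs <;> simp

lemma char_ne_two (hq : Odd (Fintype.card F)) : ringChar F ≠ 2 := by
  intro h
  have h1 := FiniteField.even_card_of_char_two h
  have h2 := Nat.odd_iff.mp hq
  omega

lemma two_ne_zero_F (hq : Odd (Fintype.card F)) : (2 : F) ≠ 0 :=
  Ring.two_ne_zero (char_ne_two hq)

lemma psi_sum (hq : Odd (Fintype.card F))
    (hψ : ∀ t : F, t ≠ 0 → ψ t = if ∃ s : F, s * s = t then 1 else -1) :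
    ∑ t ∈ Finset.univ.filter (fun t : F => t ≠ 0), ψ t = 0 := by
  obtain ⟨n, hn⟩ := FiniteField.exists_nonsquare (F := F) (char_ne_two hq)
  have hn0 : n ≠ 0 := fun h => hn (h ▸ ⟨0, (mul_zero 0).symm⟩)
  have hψn : ψ n = -1 := by
    rw [hψ n hn0, if_neg]
    exact fun ⟨s, hs⟩ => hn ⟨s, hs.symm⟩
  have key : ∑ t ∈ Finset.univ.filter (fun t : F => t ≠ 0), ψ t
      = ∑ t ∈ Finset.univ.filter (fun t : F => t ≠ 0), ψ n * ψ t := by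
    refine Finset.sum_nbij' (fun t => n⁻¹ * t) (fun t => n * t) ?_ ?_ ?_ ?_ ?_
    · intro t ht; simp only [mem_filter, mem_univ, true_and] at *
      exact mul_ne_zero (inv_ne_zero hn0) ht
    · intro t ht; simp only [mem_filter, mem_univ, true_and] at *
      exact mul_ne_zero hn0 ht
    · intro t _; field_simp
    · intro t _; field_simp
    · intro t ht; simp only [mem_filter, mem_univ, true_and] at ht
      rw [← psi_mul hψ hn0 (mul_ne_zero (inv_ne_zero hn0) ht), ← mul_assoc,
        mul_inv_cancel₀ hn0, one_mul]
  rw [← Finset.mul_sum, hψn] at key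
  linear_combination (2⁻¹ : ℂ) * key


noncomputable def gS (χ ψ : F → ℂ) : ℂ := ∑ t ∈ Finset.univ.filter (fun t : F => t ≠ 0), ψ t * χ t

lemma sum_split (f : F → ℂ) :
    ∑ t : F, f t = f 0 + ∑ t ∈ Finset.univ.filter (fun t : F => t ≠ 0), f t := by
  rw [← Finset.sum_filter_add_sum_filter_not Finset.univ (fun t : F => t = 0)]
  congr 1
  · rw [Finset.filter_eq']; simp

lemma gauss_linear (hψ : ∀ t : F, t ≠ 0 → ψ t = if ∃ s : F, s * s = t then 1 else -1)
    {c : F} (hc : c ≠ 0) :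
    ∑ t ∈ Finset.univ.filter (fun t : F => t ≠ 0), ψ t * χ (c * t) = ψ c * gS χ ψ := by
  rw [gS, Finset.mul_sum]
  refine Finset.sum_nbij' (fun t => c * t) (fun s => c⁻¹ * s) ?_ ?_ ?_ ?_ ?_
  · intro t ht; simp only [mem_filter, mem_univ, true_and] at *; exact mul_ne_zero hc ht
  · intro s hs; simp only [mem_filter, mem_univ, true_and] at *
    exact mul_ne_zero (inv_ne_zero hc) hs
  · intro t _; field_simp
  · intro s _; field_simp
  · intro t ht; simp only [mem_filter, mem_univ, true_and] at ht
    rw [psi_mul hψ hc ht, ← mul_assoc, ← mul_assoc, psi_sq hψ hc, one_mul]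

lemma g_mul_g (hq : Odd (Fintype.card F)) (hχ0 : χ 0 = 1)
    (hχm : ∀ x y : F, χ (x + y) = χ x * χ y) (hnt : ∃ x : F, χ x ≠ 1)
    (hψ : ∀ t : F, t ≠ 0 → ψ t = if ∃ s : F, s * s = t then 1 else -1) :
    gS χ ψ * gS χ ψ = ψ (-1) * (Fintype.card F : ℂ) := by
  have step1 : ∀ t : F, t ≠ 0 → (ψ t * χ t) * gS χ ψ
      = ∑ u ∈ Finset.univ.filter (fun u : F => u ≠ 0), ψ u * χ (t * (1 + u)) := by
    intro t ht
    have hre : gS χ ψ = ∑ u ∈ Finset.univ.filter (fun u : F => u ≠ 0),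
        ψ (t * u) * χ (t * u) := by
      rw [gS]
      refine Finset.sum_nbij' (fun s => t⁻¹ * s) (fun u => t * u) ?_ ?_ ?_ ?_ ?_
      · intro s hs; simp only [mem_filter, mem_univ, true_and] at *
        exact mul_ne_zero (inv_ne_zero ht) hs
      · intro u hu; simp only [mem_filter, mem_univ, true_and] at *
        exact mul_ne_zero ht hu
      · intro s _; field_simp
      · intro u _; field_simp
      · intro s _; rw [mul_inv_cancel_left₀ ht]
    rw [hre, Finset.mul_sum]
    refine Finset.sum_congr rfl ?_
    intro u hu
    simp only [mem_filter, mem_univ, true_and] at hu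
    rw [psi_mul hψ ht hu, mul_add t 1, mul_one, hχm]
    have h2 : ψ t * ψ t = 1 := psi_sq hψ ht
    ring_nf
    linear_combination (χ t * χ (t * u) * ψ u) * h2
  calc gS χ ψ * gS χ ψ
      = ∑ t ∈ Finset.univ.filter (fun t : F => t ≠ 0), (ψ t * χ t) * gS χ ψ := by
        rw [gS, Finset.sum_mul]
    _ = ∑ t ∈ Finset.univ.filter (fun t : F => t ≠ 0),
          ∑ u ∈ Finset.univ.filter (fun u : F => u ≠ 0), ψ u * χ (t * (1 + u)) := by
        refine Finset.sum_congr rfl fun t ht => ?_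
        simp only [mem_filter, mem_univ, true_and] at ht
        exact step1 t ht
    _ = ∑ u ∈ Finset.univ.filter (fun u : F => u ≠ 0),
          ∑ t ∈ Finset.univ.filter (fun t : F => t ≠ 0), ψ u * χ (t * (1 + u)) :=
        Finset.sum_comm
    _ = ∑ u ∈ Finset.univ.filter (fun u : F => u ≠ 0),
          ψ u * ((if (1 + u) = 0 then (Fintype.card F : ℂ) else 0) - 1) := by
        refine Finset.sum_congr rfl fun u _ => ?_
        rw [← Finset.mul_sum]
        congr 1
        have hs : ∑ t : F, χ ((1 + u) * t)
            = if (1 + u) = 0 then (Fintype.card F : ℂ) else 0 :=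
          chi_sum_mul hχ0 hχm hnt (1 + u)
        rw [sum_split (fun t => χ ((1 + u) * t))] at hs
        simp only [mul_zero, hχ0] at hs
        have : ∑ t ∈ Finset.univ.filter (fun t : F => t ≠ 0), χ (t * (1 + u))
            = ∑ t ∈ Finset.univ.filter (fun t : F => t ≠ 0), χ ((1 + u) * t) := by
          refine Finset.sum_congr rfl fun t _ => by rw [mul_comm]
        rw [this]
        linear_combination hs
    _ = ψ (-1) * (Fintype.card F : ℂ) := by
        have hsummand : ∀ u : F, u ≠ 0 →
            ψ u * ((if (1 + u) = 0 then (Fintype.card F : ℂ) else 0) - 1)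
            = (if u = -1 then ψ u * (Fintype.card F : ℂ) else 0) - ψ u := by
          intro u _
          by_cases h : u = -1
          · rw [if_pos h, if_pos (by rw [h]; ring)]; ring
          · rw [if_neg h, if_neg (fun hh => h (by linear_combination hh))]; ring
        rw [Finset.sum_congr rfl (fun u hu => hsummand u
          (by simpa using (Finset.mem_filter.mp hu).2)), Finset.sum_sub_distrib,
          psi_sum hq hψ, Finset.sum_ite_eq' _ (-1 : F)]
        rw [if_pos (by simp)]
        ring


lemma g_abs (hq : Odd (Fintype.card F)) (hχ0 : χ 0 = 1)
    (hχm : ∀ x y : F, χ (x + y) = χ x * χ y) (hnt : ∃ x : F, χ x ≠ 1)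
    (hψ : ∀ t : F, t ≠ 0 → ψ t = if ∃ s : F, s * s = t then 1 else -1) :
    ‖gS χ ψ‖ = Real.sqrt (Fintype.card F) := by
  have h1 : ‖gS χ ψ‖ ^ 2 = (Fintype.card F : ℝ) := by
    rw [sq, ← norm_mul, g_mul_g hq hχ0 hχm hnt hψ, norm_mul,
      psi_abs hψ (neg_ne_zero.mpr (one_ne_zero)), one_mul, Complex.norm_natCast]
  rw [← h1, Real.sqrt_sq (norm_nonneg _)]

lemma sq_card (hq : Odd (Fintype.card F))
    (hψ : ∀ t : F, t ≠ 0 → ψ t = if ∃ s : F, s * s = t then 1 else -1) (w : F) :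
    ((Finset.univ.filter (fun v : F => v * v = w)).card : ℂ)
      = 1 + (if w = 0 then 0 else ψ w) := by
  by_cases hw : w = 0
  · subst hw
    rw [if_pos rfl]
    have : (Finset.univ.filter (fun v : F => v * v = 0)) = {0} := by
      ext v; simp [mul_self_eq_zero]
    rw [this]; simp
  · rw [if_neg hw, hψ w hw]
    by_cases h : ∃ s : F, s * s = w
    · obtain ⟨s, hs⟩ := h
      have hs0 : s ≠ 0 := fun h0 => hw (by rw [← hs, h0, mul_zero])
      have hset : (Finset.univ.filter (fun v : F => v * v = w)) = {s, -s} := by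
        ext v
        simp only [mem_filter, mem_univ, true_and, Finset.mem_insert, Finset.mem_singleton]
        constructor
        · intro hv
          have : (v - s) * (v + s) = 0 := by linear_combination hv - hs
          rcases mul_eq_zero.mp this with h' | h'
          · left; linear_combination h'
          · right; linear_combination h'
        · rintro (rfl | rfl)
          · exact hs
          · linear_combination hs
      have hsne : s ≠ -s := by
        intro h'
        have : (2 : F) * s = 0 := by linear_combination h'
        rcases mul_eq_zero.mp this with h'' | h''
        · exact two_ne_zero_F hq h''
        · exact hs0 h''
      rw [hset, if_pos ⟨s, hs⟩, Finset.card_insert_of_notMem (by simpa using hsne),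
        Finset.card_singleton]
      norm_num
    · have hset : (Finset.univ.filter (fun v : F => v * v = w)) = ∅ := by
        ext v; simp only [mem_filter, mem_univ, true_and, Finset.notMem_empty, iff_false]
        exact fun hv => h ⟨v, hv⟩
      rw [hset, if_neg h]
      simp

lemma sq_gauss (hq : Odd (Fintype.card F)) (hχ0 : χ 0 = 1)
    (hχm : ∀ x y : F, χ (x + y) = χ x * χ y) (hnt : ∃ x : F, χ x ≠ 1)
    (hψ : ∀ t : F, t ≠ 0 → ψ t = if ∃ s : F, s * s = t then 1 else -1)
    {c : F} (hc : c ≠ 0) :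
    ∑ v : F, χ (c * (v * v)) = ψ c * gS χ ψ := by
  have fib : ∑ v : F, χ (c * (v * v))
      = ∑ w : F, ∑ v ∈ Finset.univ.filter (fun v : F => v * v = w), χ (c * (v * v)) :=
    (Finset.sum_fiberwise Finset.univ (fun v : F => v * v) (fun v => χ (c * (v * v)))).symm
  rw [fib]
  have inner : ∀ w : F, ∑ v ∈ Finset.univ.filter (fun v : F => v * v = w), χ (c * (v * v))
      = ((Finset.univ.filter (fun v : F => v * v = w)).card : ℂ) * χ (c * w) := by
    intro w
    rw [Finset.sum_congr rfl (fun v hv => by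
      rw [(Finset.mem_filter.mp hv).2]), Finset.sum_const, nsmul_eq_mul]
  rw [Finset.sum_congr rfl (fun w _ => inner w)]
  rw [Finset.sum_congr rfl (fun w _ => by rw [sq_card hq hψ w])]
  have expand : ∀ w : F, (1 + (if w = 0 then (0:ℂ) else ψ w)) * χ (c * w)
      = χ (c * w) + (if w = 0 then 0 else ψ w * χ (c * w)) := by
    intro w; split_ifs <;> ring
  rw [Finset.sum_congr rfl (fun w _ => expand w), Finset.sum_add_distrib,
    chi_sum_mul hχ0 hχm hnt c, if_neg hc, zero_add]
  have : ∑ w : F, (if w = 0 then (0:ℂ) else ψ w * χ (c * w))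
      = ∑ w ∈ Finset.univ.filter (fun w : F => w ≠ 0), ψ w * χ (c * w) := by
    rw [Finset.sum_filter]
    refine Finset.sum_congr rfl fun w _ => ?_
    by_cases hw : w = 0 <;> simp [hw]
  rw [this, gauss_linear hψ hc]


lemma fourier_h (hχ0 : χ 0 = 1)
    (hχm : ∀ x y : F, χ (x + y) = χ x * χ y) (hnt : ∃ x : F, χ x ≠ 1)
    (hψ : ∀ t : F, t ≠ 0 → ψ t = if ∃ s : F, s * s = t then 1 else -1)
    {a : F} (ha : a ≠ 0) (u : F) :
    ∑ b : F, (∑ t ∈ Finset.univ.filter (fun t : F => t ≠ 0),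
        ψ t * χ (a * t + b * t⁻¹)) * χ (u * b)
      = if u = 0 then 0 else (Fintype.card F : ℂ) * (ψ (-u) * χ (-(a * u⁻¹))) := by
  have step : ∀ b : F, (∑ t ∈ Finset.univ.filter (fun t : F => t ≠ 0),
      ψ t * χ (a * t + b * t⁻¹)) * χ (u * b)
      = ∑ t ∈ Finset.univ.filter (fun t : F => t ≠ 0),
        ψ t * χ (a * t) * χ ((t⁻¹ + u) * b) := by
    intro b
    rw [Finset.sum_mul]
    refine Finset.sum_congr rfl fun t _ => ?_
    rw [hχm (a * t) (b * t⁻¹), show (t⁻¹ + u) * b = b * t⁻¹ + u * b from by ring,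
      hχm (b * t⁻¹) (u * b)]
    ring
  rw [Finset.sum_congr rfl (fun b _ => step b), Finset.sum_comm]
  have inner : ∀ t : F, t ≠ 0 → ∑ b : F, ψ t * χ (a * t) * χ ((t⁻¹ + u) * b)
      = ψ t * χ (a * t) * (if t⁻¹ + u = 0 then (Fintype.card F : ℂ) else 0) := by
    intro t _
    rw [← Finset.mul_sum, chi_sum_mul hχ0 hχm hnt]
  rw [Finset.sum_congr rfl (fun t ht => inner t (by simpa using (Finset.mem_filter.mp ht).2))]
  by_cases hu : u = 0
  · subst hu
    rw [if_pos rfl]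
    refine Finset.sum_eq_zero fun t ht => ?_
    have ht0 : t ≠ 0 := by simpa using (Finset.mem_filter.mp ht).2
    rw [if_neg (by simpa using inv_ne_zero ht0), mul_zero]
  · rw [if_neg hu]
    have hu0 : -u⁻¹ ≠ 0 := neg_ne_zero.mpr (inv_ne_zero hu)
    rw [Finset.sum_eq_single_of_mem (-u⁻¹) (by simp [hu0]) ?side]
    · have h1 : ψ (-u⁻¹) = ψ (-u) := by
        rw [show (-u⁻¹ : F) = (-u)⁻¹ by rw [inv_neg]]
        exact psi_inv hψ (neg_ne_zero.mpr hu)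
      rw [if_pos (by rw [inv_neg, inv_inv]; ring), h1, show a * -u⁻¹ = -(a * u⁻¹) from by ring]
      ring
    case side =>
      intro t ht htne
      have ht0 : t ≠ 0 := by simpa using (Finset.mem_filter.mp ht).2
      rw [if_neg, mul_zero]
      intro hcon
      apply htne
      have h2 : t⁻¹ = -u := by linear_combination hcon
      rw [← inv_inv t, h2, inv_neg]


lemma fourier_f (hq : Odd (Fintype.card F)) (hχ0 : χ 0 = 1)
    (hχm : ∀ x y : F, χ (x + y) = χ x * χ y) (hnt : ∃ x : F, χ x ≠ 1)
    (hψ : ∀ t : F, t ≠ 0 → ψ t = if ∃ s : F, s * s = t then 1 else -1)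
    {a : F} (ha : a ≠ 0) (u : F) :
    ∑ b : F, (ψ a * gS χ ψ *
        ∑ v ∈ Finset.univ.filter (fun v : F => v * v = a * b), χ (2 * v)) * χ (u * b)
      = if u = 0 then 0 else (Fintype.card F : ℂ) * (ψ (-u) * χ (-(a * u⁻¹))) := by
  have step1 : ∀ b : F, (ψ a * gS χ ψ *
      ∑ v ∈ Finset.univ.filter (fun v : F => v * v = a * b), χ (2 * v)) * χ (u * b)
      = ψ a * gS χ ψ * ∑ v : F, (if v * v = a * b then χ (2 * v) * χ (u * b) else 0) := by
    intro b
    have hh : (∑ v ∈ Finset.univ.filter (fun v : F => v * v = a * b), χ (2 * v)) * χ (u * b)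
        = ∑ v : F, (if v * v = a * b then χ (2 * v) * χ (u * b) else 0) := by
      rw [Finset.sum_mul, ← Finset.sum_filter]
    calc (ψ a * gS χ ψ *
        ∑ v ∈ Finset.univ.filter (fun v : F => v * v = a * b), χ (2 * v)) * χ (u * b)
        = ψ a * gS χ ψ * ((∑ v ∈ Finset.univ.filter (fun v : F => v * v = a * b),
            χ (2 * v)) * χ (u * b)) := by ring
      _ = _ := by rw [hh]
  rw [Finset.sum_congr rfl (fun b _ => step1 b), ← Finset.mul_sum, Finset.sum_comm]
  have step2 : ∀ v : F, ∑ b : F, (if v * v = a * b then χ (2 * v) * χ (u * b) else 0)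
      = χ (2 * v) * χ (u * (a⁻¹ * (v * v))) := by
    intro v
    have hcong : ∀ b : F, (if v * v = a * b then χ (2 * v) * χ (u * b) else 0)
        = (if b = a⁻¹ * (v * v) then χ (2 * v) * χ (u * b) else 0) := by
      intro b
      by_cases h : v * v = a * b
      · rw [if_pos h, if_pos (by field_simp; linear_combination -h)]
      · rw [if_neg h, if_neg (fun hb => h (by rw [hb]; field_simp))]
    rw [Finset.sum_congr rfl (fun b _ => hcong b), Finset.sum_ite_eq' Finset.univ]
    simp
  rw [Finset.sum_congr rfl (fun v _ => step2 v)]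
  by_cases hu : u = 0
  · subst hu
    rw [if_pos rfl]
    have : ∀ v : F, χ (2 * v) * χ (0 * (a⁻¹ * (v * v))) = χ (2 * v) := by
      intro v; rw [zero_mul, hχ0, mul_one]
    rw [Finset.sum_congr rfl (fun v _ => this v), chi_sum_mul hχ0 hχm hnt 2,
      if_neg (two_ne_zero_F hq), mul_zero]
  · rw [if_neg hu]
    set c : F := u * a⁻¹ with hcdef
    have hc : c ≠ 0 := mul_ne_zero hu (inv_ne_zero ha)
    have harg : ∀ v : F, χ (2 * v) * χ (u * (a⁻¹ * (v * v)))
        = χ (c * ((v + c⁻¹) * (v + c⁻¹))) * χ (-(c⁻¹)) := by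
      intro v
      rw [← hχm, ← hχm]
      congr 1
      rw [hcdef, mul_inv, inv_inv]
      field_simp
      ring
    rw [Finset.sum_congr rfl (fun v _ => harg v), ← Finset.sum_mul]
    have hre : ∑ v : F, χ (c * ((v + c⁻¹) * (v + c⁻¹))) = ∑ w : F, χ (c * (w * w)) :=
      Fintype.sum_equiv (Equiv.addRight c⁻¹) _ _ (fun v => rfl)
    rw [hre, sq_gauss hq hχ0 hχm hnt hψ hc]
    have hcinv : c⁻¹ = a * u⁻¹ := by rw [hcdef, mul_inv, inv_inv, mul_comm]
    have hpsic : ψ c = ψ u * ψ a := by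
      rw [hcdef, psi_mul hψ hu (inv_ne_zero ha), psi_inv hψ ha]
    have hpsineg : ψ (-u) = ψ (-1) * ψ u := by
      rw [show (-u : F) = -1 * u from by ring,
        psi_mul hψ (neg_ne_zero.mpr one_ne_zero) hu]
    calc ψ a * gS χ ψ * (ψ c * gS χ ψ * χ (-c⁻¹))
        = (ψ a * ψ c) * (gS χ ψ * gS χ ψ) * χ (-c⁻¹) := by ring
      _ = (ψ a * (ψ u * ψ a)) * (ψ (-1) * (Fintype.card F : ℂ)) * χ (-(a * u⁻¹)) := by
          rw [hpsic, g_mul_g hq hχ0 hχm hnt hψ, hcinv]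
      _ = (ψ a * ψ a) * (ψ (-1) * ψ u) * (Fintype.card F : ℂ) * χ (-(a * u⁻¹)) := by ring
      _ = (Fintype.card F : ℂ) * (ψ (-u) * χ (-(a * u⁻¹))) := by
          rw [psi_sq hψ ha, ← hpsineg]; ring

lemma fourier_inj (hχ0 : χ 0 = 1)
    (hχm : ∀ x y : F, χ (x + y) = χ x * χ y) (hnt : ∃ x : F, χ x ≠ 1)
    (h f : F → ℂ)
    (H : ∀ u : F, ∑ b : F, h b * χ (u * b) = ∑ b : F, f b * χ (u * b)) :
    ∀ b, h b = f b := by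
  have key : ∀ (g : F → ℂ) (b : F),
      ∑ u : F, (∑ b' : F, g b' * χ (u * b')) * χ (u * (-b))
        = (Fintype.card F : ℂ) * g b := by
    intro g b
    have step : ∀ u : F, (∑ b' : F, g b' * χ (u * b')) * χ (u * (-b))
        = ∑ b' : F, g b' * χ ((b' - b) * u) := by
      intro u
      rw [Finset.sum_mul]
      refine Finset.sum_congr rfl fun b' _ => ?_
      rw [mul_assoc, ← hχm]
      congr 2
      ring
    rw [Finset.sum_congr rfl (fun u _ => step u), Finset.sum_comm]
    have inner : ∀ b' : F, ∑ u : F, g b' * χ ((b' - b) * u)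
        = if b' = b then g b' * (Fintype.card F : ℂ) else 0 := by
      intro b'
      rw [← Finset.mul_sum, chi_sum_mul hχ0 hχm hnt]
      by_cases hb : b' = b
      · rw [if_pos (by rw [hb, sub_self]), if_pos hb]
      · rw [if_neg (fun hh => hb (by linear_combination hh)), if_neg hb, mul_zero]
    rw [Finset.sum_congr rfl (fun b' _ => inner b'), Finset.sum_ite_eq' Finset.univ]
    rw [if_pos (Finset.mem_univ b)]
    ring
  intro b
  have hq0 : (Fintype.card F : ℂ) ≠ 0 := Nat.cast_ne_zero.mpr Fintype.card_ne_zero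
  have := (key h b).symm.trans ((Finset.sum_congr rfl (fun u _ => by rw [H u])).trans (key f b))
  exact mul_left_cancel₀ hq0 this


lemma salie_eval (hq : Odd (Fintype.card F)) (hχ0 : χ 0 = 1)
    (hχm : ∀ x y : F, χ (x + y) = χ x * χ y) (hnt : ∃ x : F, χ x ≠ 1)
    (hψ : ∀ t : F, t ≠ 0 → ψ t = if ∃ s : F, s * s = t then 1 else -1)
    {a : F} (ha : a ≠ 0) (b : F) :
    ∑ t ∈ Finset.univ.filter (fun t : F => t ≠ 0), ψ t * χ (a * t + b * t⁻¹)
      = ψ a * gS χ ψ * ∑ v ∈ Finset.univ.filter (fun v : F => v * v = a * b), χ (2 * v) :=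
  fourier_inj hχ0 hχm hnt
    (fun b => ∑ t ∈ Finset.univ.filter (fun t : F => t ≠ 0), ψ t * χ (a * t + b * t⁻¹))
    (fun b => ψ a * gS χ ψ * ∑ v ∈ Finset.univ.filter (fun v : F => v * v = a * b), χ (2 * v))
    (fun u => (fourier_h hχ0 hχm hnt hψ ha u).trans (fourier_f hq hχ0 hχm hnt hψ ha u).symm) b

lemma card_sq_le_two (c : F) : (Finset.univ.filter (fun v : F => v * v = c)).card ≤ 2 := by
  by_cases h : ∃ s : F, s * s = c
  · obtain ⟨s, hs⟩ := h
    have hsub : Finset.univ.filter (fun v : F => v * v = c) ⊆ {s, -s} := by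
      intro v hv
      simp only [mem_filter, mem_univ, true_and] at hv
      have : (v - s) * (v + s) = 0 := by linear_combination hv - hs
      rcases mul_eq_zero.mp this with h' | h'
      · simp only [Finset.mem_insert, Finset.mem_singleton]
        left; linear_combination h'
      · simp only [Finset.mem_insert, Finset.mem_singleton]
        right; linear_combination h'
    exact le_trans (Finset.card_le_card hsub)
      (le_trans (Finset.card_insert_le _ _) (by simp))
  · have : Finset.univ.filter (fun v : F => v * v = c) = ∅ := by
      ext v
      simp only [mem_filter, mem_univ, true_and, Finset.notMem_empty, iff_false]
      exact fun hv => h ⟨v, hv⟩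
    rw [this]
    simp

end Salie


/-- Salié sum (twisted Kloosterman sum) bound: for `q` odd, a nontrivial additive
character `χ`, the quadratic character `ψ`, and any `a b ∈ F_q`,
`|∑_{t ∈ F_q^*} ψ(t) χ(at + b t⁻¹)| ≤ C q^{1/2}` with an absolute constant `C`. -/
theorem stmt6 :
    ∃ C : ℝ, 0 < C ∧
      ∀ (F : Type) [Field F] [Fintype F] [DecidableEq F],
        Odd (Fintype.card F) →
        ∀ χ : F → ℂ, χ 0 = 1 → (∀ x y : F, χ (x + y) = χ x * χ y) → (∃ x : F, χ x ≠ 1) →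
        ∀ ψ : F → ℂ, (∀ t : F, t ≠ 0 → ψ t = if ∃ s : F, s * s = t then 1 else -1) →
        ∀ a b : F,
          ‖(∑ t ∈ Finset.univ.filter (fun t : F => t ≠ 0),
              ψ t * χ (a * t + b * t⁻¹))‖
            ≤ C * Real.sqrt (Fintype.card F) := by
  refine ⟨2, by norm_num, ?_⟩
  intro F _ _ _ hq χ hχ0 hχm hnt ψ hψ a b
  have hsq : (0:ℝ) ≤ Real.sqrt (Fintype.card F) := Real.sqrt_nonneg _
  by_cases ha : a = 0
  · subst ha
    have hsimp : ∑ t ∈ Finset.univ.filter (fun t : F => t ≠ 0), ψ t * χ (0 * t + b * t⁻¹)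
        = ∑ t ∈ Finset.univ.filter (fun t : F => t ≠ 0), ψ t * χ (b * t) := by
      refine Finset.sum_nbij' (fun t => t⁻¹) (fun t => t⁻¹) ?_ ?_ ?_ ?_ ?_
      · intro t ht; simp only [mem_filter, mem_univ, true_and] at *; exact inv_ne_zero ht
      · intro t ht; simp only [mem_filter, mem_univ, true_and] at *; exact inv_ne_zero ht
      · intro t _; simp
      · intro t _; simp
      · intro t ht
        simp only [mem_filter, mem_univ, true_and] at ht
        rw [psi_inv hψ ht, zero_mul, zero_add]
    rw [hsimp]
    by_cases hb : b = 0
    · subst hb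
      have : ∑ t ∈ Finset.univ.filter (fun t : F => t ≠ 0), ψ t * χ (0 * t)
          = ∑ t ∈ Finset.univ.filter (fun t : F => t ≠ 0), ψ t := by
        refine Finset.sum_congr rfl fun t _ => by rw [zero_mul, hχ0, mul_one]
      rw [this, psi_sum hq hψ]
      simp [hsq]
    · rw [gauss_linear hψ hb, norm_mul, psi_abs hψ hb, one_mul,
        g_abs hq hχ0 hχm hnt hψ]
      nlinarith
  · rw [salie_eval hq hχ0 hχm hnt hψ ha b, norm_mul, norm_mul, psi_abs hψ ha, one_mul,
      g_abs hq hχ0 hχm hnt hψ]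
    have hbound : ‖(∑ v ∈ Finset.univ.filter (fun v : F => v * v = a * b),
        χ (2 * v))‖ ≤ 2 := by
      refine le_trans (norm_sum_le _ _) ?_
      have : ∀ v ∈ Finset.univ.filter (fun v : F => v * v = a * b),
          ‖χ (2 * v)‖ = 1 := fun v _ => chi_abs hχ0 hχm _
      rw [Finset.sum_congr rfl this, Finset.sum_const, nsmul_eq_mul, mul_one]
      exact_mod_cast card_sq_le_two (a * b)
    calc Real.sqrt (Fintype.card F) * ‖(∑ v ∈ Finset.univ.filter
          (fun v : F => v * v = a * b), χ (2 * v))‖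
        ≤ Real.sqrt (Fintype.card F) * 2 := by
          exact mul_le_mul_of_nonneg_left hbound hsq
      _ = 2 * Real.sqrt (Fintype.card F) := by ring
end

section
/- Let d ≥ 2, let F_q be a finite field of odd characteristic, Q a non-degenerate quadratic form on F_q^d, and j ∈ F_q \ {0}. Then for every x ∈ F_q^d with x ≠ (0,…,0), the number of pairs (α, β) ∈ S_j × S_j with α + β = x is at most 2 q^{d−2}. -/
open Finset

section aux
variable {F : Type} [Field F] {d : ℕ}

def Bf (a : Matrix (Fin d) (Fin d) F) (u v : Fin d → F) : F :=
  ∑ i, ∑ k, a i k * u i * v k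

lemma Bf_sym {a : Matrix (Fin d) (Fin d) F} (hsym : ∀ i k, a i k = a k i)
    (u v : Fin d → F) : Bf a u v = Bf a v u := by
  unfold Bf
  rw [Finset.sum_comm]
  refine Finset.sum_congr rfl fun k _ => Finset.sum_congr rfl fun i _ => ?_
  rw [hsym]; ring

lemma Bf_add_right (a : Matrix (Fin d) (Fin d) F) (u v w : Fin d → F) :
    Bf a u (v + w) = Bf a u v + Bf a u w := by
  simp [Bf, mul_add, Finset.sum_add_distrib]

lemma Bf_smul_right (a : Matrix (Fin d) (Fin d) F) (t : F) (u v : Fin d → F) :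
    Bf a u (t • v) = t * Bf a u v := by
  simp only [Bf, Pi.smul_apply, smul_eq_mul, Finset.mul_sum]
  exact Finset.sum_congr rfl fun i _ => Finset.sum_congr rfl fun k _ => by ring

lemma Bf_add_left (a : Matrix (Fin d) (Fin d) F) (u v w : Fin d → F) :
    Bf a (u + v) w = Bf a u w + Bf a v w := by
  simp [Bf, add_mul, mul_add, Finset.sum_add_distrib]

lemma Bf_smul_left (a : Matrix (Fin d) (Fin d) F) (t : F) (u v : Fin d → F) :
    Bf a (t • u) v = t * Bf a u v := by
  simp only [Bf, Pi.smul_apply, smul_eq_mul, Finset.mul_sum]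
  exact Finset.sum_congr rfl fun i _ => Finset.sum_congr rfl fun k _ => by ring

lemma Bf_sub_right (a : Matrix (Fin d) (Fin d) F) (u v w : Fin d → F) :
    Bf a u (v - w) = Bf a u v - Bf a u w := by
  simp [Bf, mul_sub, Finset.sum_sub_distrib]

lemma Bf_sub_left (a : Matrix (Fin d) (Fin d) F) (u v w : Fin d → F) :
    Bf a (u - v) w = Bf a u w - Bf a v w := by
  simp [Bf, sub_mul, mul_sub, Finset.sum_sub_distrib]

lemma Bf_eq_sum_vecMul (a : Matrix (Fin d) (Fin d) F) (u v : Fin d → F) :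
    Bf a u v = ∑ k, (Matrix.vecMul u a) k * v k := by
  unfold Bf
  rw [Finset.sum_comm]
  refine Finset.sum_congr rfl fun k _ => ?_
  rw [Matrix.vecMul, dotProduct, Finset.sum_mul]
  exact Finset.sum_congr rfl fun i _ => by ring

lemma vecMul_ne_zero {a : Matrix (Fin d) (Fin d) F} (hdet : a.det ≠ 0)
    {v : Fin d → F} (hv : v ≠ 0) : Matrix.vecMul v a ≠ 0 := by
  intro h
  haveI := a.invertibleOfIsUnitDet (isUnit_iff_ne_zero.2 hdet)
  apply hv
  have h0 : Matrix.vecMul (Matrix.vecMul v a) a⁻¹ = v := by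
    rw [Matrix.vecMul_vecMul, Matrix.mul_inv_of_invertible, Matrix.vecMul_one]
  rw [← h0, h, Matrix.zero_vecMul]

end aux

/-- For every `x ≠ 0`, the number of pairs `(α,β) ∈ S_j × S_j` with `α + β = x`
is at most `2 q^{d-2}`. -/
theorem stmt15 (d : ℕ) (hd : 2 ≤ d)
    (F : Type) [Field F] [Fintype F] [DecidableEq F]
    (hchar : Odd (ringChar F))
    (a : Matrix (Fin d) (Fin d) F) (hsym : ∀ i k, a i k = a k i) (hdet : a.det ≠ 0)
    (j : F) (hj : j ≠ 0)
    (x : Fin d → F) (hx : x ≠ 0) :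
    (((Surf a j) ×ˢ (Surf a j)).filter (fun pr => pr.1 + pr.2 = x)).card
      ≤ 2 * Fintype.card F ^ (d - 2) := by
  classical
  -- 2 ≠ 0 in F
  have h2 : (2 : F) ≠ 0 := by
    intro h
    have hdvd : ringChar F ∣ 2 := (ringChar.spec F 2).1 (by exact_mod_cast h)
    have h1 : ringChar F = 1 := by
      have := Nat.le_of_dvd (by norm_num) hdvd
      rcases hchar with ⟨m, hm⟩
      omega
    have : (1 : F) = 0 := by
      have := (ringChar.spec F 1).2 (by rw [h1])
      exact_mod_cast this
    exact one_ne_zero this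
  have hmemSurf : ∀ y : Fin d → F, y ∈ Surf a j ↔ Bf a y y = j := by
    intro y; simp [Surf, Bf]
  -- the set of α with Q α = j and 2 B x α = Q x
  set S : Finset (Fin d → F) :=
    Finset.univ.filter (fun α => Bf a α α = j ∧ 2 * Bf a x α = Bf a x x) with hSdef
  have hmemS : ∀ α, α ∈ S ↔ Bf a α α = j ∧ 2 * Bf a x α = Bf a x x := by
    intro α; simp [hSdef]
  have hexp : ∀ α : Fin d → F,
      Bf a (x - α) (x - α) = Bf a x x - 2 * Bf a x α + Bf a α α := by
    intro α
    rw [Bf_sub_left, Bf_sub_right, Bf_sub_right, Bf_sym hsym α x]; ring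
  have hcard : (((Surf a j) ×ˢ (Surf a j)).filter (fun pr => pr.1 + pr.2 = x)).card
      = S.card := by
    apply Finset.card_nbij' (fun pr => pr.1) (fun α => (α, x - α))
    · intro pr hpr
      simp only [Finset.mem_coe, Finset.mem_filter, Finset.mem_product] at hpr
      obtain ⟨⟨h1', h2'⟩, h3⟩ := hpr
      rw [hmemSurf] at h1' h2'
      rw [Finset.mem_coe, hmemS]
      refine ⟨h1', ?_⟩
      have hpr2 : pr.2 = x - pr.1 := by
        rw [← h3]; abel
      rw [hpr2, hexp, h1'] at h2'
      linear_combination -h2'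
    · intro α hα
      rw [Finset.mem_coe, hmemS] at hα
      simp only [Finset.mem_coe, Finset.mem_filter, Finset.mem_product]
      refine ⟨⟨(hmemSurf _).2 hα.1, (hmemSurf _).2 ?_⟩, by abel⟩
      rw [hexp, hα.1, ← hα.2]; ring
    · intro pr hpr
      simp only [Finset.mem_coe, Finset.mem_filter] at hpr
      have : x - pr.1 = pr.2 := by rw [← hpr.2]; abel
      exact Prod.ext rfl this
    · intro α _; rfl
  rw [hcard]
  set c := Matrix.vecMul x a with hc
  have hBc : ∀ v, Bf a x v = ∑ k, c k * v k := fun v => Bf_eq_sum_vecMul a x v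
  have hc0 : c ≠ 0 := vecMul_ne_zero hdet hx
  by_cases hcase : ∃ e, Bf a x e = 0 ∧ Bf a e e ≠ 0
  · -- main case
    obtain ⟨e, hxe, hQe⟩ := hcase
    have he0 : e ≠ 0 := by rintro rfl; exact hQe (by simp [Bf])
    obtain ⟨i0, hei0⟩ : ∃ i0, e i0 ≠ 0 := by
      by_contra h; push_neg at h; exact he0 (funext fun i => h i)
    obtain ⟨k1, hk1i0, hck1⟩ : ∃ k1, k1 ≠ i0 ∧ c k1 ≠ 0 := by
      by_contra h; push_neg at h
      have hsum : ∑ k, c k * e k = 0 := by rw [← hBc]; exact hxe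
      rw [Finset.sum_eq_single i0] at hsum
      · have hci0 : c i0 = 0 := by
          rcases mul_eq_zero.1 hsum with h' | h'
          · exact h'
          · exact absurd h' hei0
        apply hc0; funext k
        by_cases hk : k = i0
        · rw [hk]; exact hci0
        · simpa using h k hk
      · intro k _ hk; rw [h k hk]; ring
      · intro h'; exact absurd (Finset.mem_univ i0) h'
    set P : Finset (Fin d → F) :=
      Finset.univ.filter (fun p => p i0 = 0 ∧ 2 * Bf a x p = Bf a x x) with hPdef
    set f : (Fin d → F) → (Fin d → F) := fun α => α - (α i0 * (e i0)⁻¹) • e with hf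
    have hfP : ∀ α ∈ S, f α ∈ P := by
      intro α hα
      rw [hmemS] at hα
      simp only [hPdef, Finset.mem_filter, Finset.mem_univ, true_and]
      constructor
      · simp only [hf, Pi.sub_apply, Pi.smul_apply, smul_eq_mul]
        field_simp; ring
      · simp only [hf]
        rw [Bf_sub_right, Bf_smul_right, hxe, mul_zero, sub_zero]
        exact hα.2
    have key : S.card = ∑ p ∈ P, (S.filter fun α => f α = p).card :=
      Finset.card_eq_sum_card_fiberwise hfP
    have hfiber : ∀ p ∈ P, (S.filter fun α => f α = p).card ≤ 2 := by
      intro p _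
      set poly : Polynomial F :=
        Polynomial.C (Bf a e e) * Polynomial.X ^ 2
          + Polynomial.C (2 * Bf a p e) * Polynomial.X
          + Polynomial.C (Bf a p p - j) with hpoly
      have hdeg : poly.natDegree = 2 := Polynomial.natDegree_quadratic hQe
      have hp0 : poly ≠ 0 := by intro h; rw [h] at hdeg; simp at hdeg
      have hsub : (S.filter fun α => f α = p).card ≤ poly.roots.toFinset.card := by
        apply Finset.card_le_card_of_injOn (fun α => α i0 * (e i0)⁻¹)
        · intro α hα
          simp only [Finset.mem_coe, Finset.mem_filter] at hα
          obtain ⟨hαS, hfα⟩ := hα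
          rw [hmemS] at hαS
          have hα_eq : α = p + (α i0 * (e i0)⁻¹) • e := by
            rw [← hfα]; simp only [hf]; abel
          have hQα := hαS.1
          rw [hα_eq] at hQα
          simp only [Bf_add_left, Bf_add_right, Bf_smul_left, Bf_smul_right] at hQα
          rw [Bf_sym hsym e p] at hQα
          rw [Finset.mem_coe, Multiset.mem_toFinset, Polynomial.mem_roots hp0]
          simp only [Polynomial.IsRoot, hpoly, Polynomial.eval_add, Polynomial.eval_mul,
            Polynomial.eval_pow, Polynomial.eval_C, Polynomial.eval_X]
          linear_combination hQα
        · intro α hα β hβ heq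
          simp only [Finset.mem_coe, Finset.mem_filter] at hα hβ
          have hα_eq : α = p + (α i0 * (e i0)⁻¹) • e := by
            rw [← hα.2]; simp only [hf]; abel
          have hβ_eq : β = p + (β i0 * (e i0)⁻¹) • e := by
            rw [← hβ.2]; simp only [hf]; abel
          rw [hα_eq, hβ_eq, show α i0 * (e i0)⁻¹ = β i0 * (e i0)⁻¹ from heq]
      have h1 := Multiset.toFinset_card_le poly.roots
      have hr := poly.card_roots'
      omega
    have hPcard : P.card ≤ Fintype.card F ^ (d - 2) := by
      have hinj : P.card ≤ (Finset.univ : Finset ({k : Fin d // k ≠ i0 ∧ k ≠ k1} → F)).card := by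
        apply Finset.card_le_card_of_injOn (fun p => fun k => p k.1)
        · intro _ _; exact Finset.mem_univ _
        · intro p hp q hq heq
          simp only [Finset.mem_coe, hPdef, Finset.mem_filter, Finset.mem_univ, true_and] at hp hq
          have hcongr : ∀ k : Fin d, k ≠ i0 → k ≠ k1 → p k = q k := by
            intro k h1' h2'
            exact congrFun heq ⟨k, h1', h2'⟩
          have hk1eq : p k1 = q k1 := by
            have hsum : ∑ k, c k * p k = ∑ k, c k * q k := by
              have := hp.2.trans hq.2.symm
              rw [hBc, hBc] at this
              exact mul_left_cancel₀ h2 this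
            have hrest : ∑ k ∈ Finset.univ.erase k1, c k * p k
                = ∑ k ∈ Finset.univ.erase k1, c k * q k := by
              refine Finset.sum_congr rfl fun k hk => ?_
              have hkne : k ≠ k1 := (Finset.mem_erase.1 hk).1
              by_cases hki : k = i0
              · rw [hki, hp.1, hq.1]
              · rw [hcongr k hki hkne]
            have h1' := Finset.add_sum_erase Finset.univ (fun k => c k * p k) (Finset.mem_univ k1)
            have h2'' := Finset.add_sum_erase Finset.univ (fun k => c k * q k) (Finset.mem_univ k1)
            have : c k1 * p k1 = c k1 * q k1 := by
              have := h1'.trans (hsum.trans h2''.symm)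
              rw [hrest] at this
              exact add_right_cancel this
            exact mul_left_cancel₀ hck1 this
          funext k
          by_cases hki : k = i0
          · rw [hki, hp.1, hq.1]
          · by_cases hkk : k = k1
            · rw [hkk]; exact hk1eq
            · exact hcongr k hki hkk
      have hcardfun : (Finset.univ : Finset ({k : Fin d // k ≠ i0 ∧ k ≠ k1} → F)).card
          = Fintype.card F ^ (d - 2) := by
        rw [Finset.card_univ, Fintype.card_fun]
        congr 1
        rw [Fintype.card_subtype]
        have hfe : Finset.univ.filter (fun k : Fin d => k ≠ i0 ∧ k ≠ k1)
            = (Finset.univ.erase i0).erase k1 := by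
          ext k
          simp only [Finset.mem_filter, Finset.mem_univ, true_and, Finset.mem_erase, and_comm]
        rw [hfe, Finset.card_erase_of_mem (Finset.mem_erase.2 ⟨hk1i0, Finset.mem_univ _⟩),
          Finset.card_erase_of_mem (Finset.mem_univ _), Finset.card_univ, Fintype.card_fin]
        omega
      omega
    calc S.card = ∑ p ∈ P, (S.filter fun α => f α = p).card := key
      _ ≤ ∑ _p ∈ P, 2 := Finset.sum_le_sum hfiber
      _ = 2 * P.card := by rw [Finset.sum_const, smul_eq_mul, mul_comm]
      _ ≤ 2 * Fintype.card F ^ (d - 2) := Nat.mul_le_mul_left 2 hPcard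
  · -- degenerate case: S is empty
    push_neg at hcase
    have hiso : ∀ e, Bf a x e = 0 → Bf a e e = 0 := fun e he => by
      by_contra h; exact h (hcase e he)
    have hQx : Bf a x x = 0 := by
      by_contra hQx
      obtain ⟨k0, hck0⟩ : ∃ k0, c k0 ≠ 0 := Function.ne_iff.1 hc0
      obtain ⟨k1, hk1⟩ : ∃ k1 : Fin d, k1 ≠ k0 := by
        have : 1 < Fintype.card (Fin d) := by simp; omega
        exact Fintype.exists_ne_of_one_lt_card this k0
      set v : Fin d → F :=
        fun k => if k = k1 then 1 else if k = k0 then -(c k1 / c k0) else 0 with hvdef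
      have hv1 : v k1 = 1 := by simp [hvdef]
      have hxv : Bf a x v = 0 := by
        rw [hBc]
        rw [← Finset.sum_subset (Finset.subset_univ ({k0, k1} : Finset (Fin d)))]
        · rw [Finset.sum_pair (Ne.symm hk1)]
          have hv0 : v k0 = -(c k1 / c k0) := by simp [hvdef, Ne.symm hk1]
          rw [hv0, hv1]
          field_simp
          ring
        · intro k _ hk
          simp only [Finset.mem_insert, Finset.mem_singleton, not_or] at hk
          simp [hvdef, hk.1, hk.2]
      have hvw : ∀ w, Bf a v w = 0 := by
        intro w
        have hlam : Bf a x (w - (Bf a x w / Bf a x x) • x) = 0 := by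
          rw [Bf_sub_right, Bf_smul_right]; field_simp; ring
        set w0 := w - (Bf a x w / Bf a x x) • x with hw0
        have h1 : Bf a v w0 = 0 := by
          have hvw0 : Bf a x (v + w0) = 0 := by rw [Bf_add_right, hxv, hlam]; ring
          have hq := hiso _ hvw0
          have hqv := hiso _ hxv
          have hqw0 := hiso _ hlam
          simp only [Bf_add_left, Bf_add_right] at hq
          rw [Bf_sym hsym w0 v] at hq
          have h2B : 2 * Bf a v w0 = 0 := by
            rw [hqv, hqw0] at hq; linear_combination hq
          rcases mul_eq_zero.1 h2B with h' | h'
          · exact absurd h' h2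
          · exact h'
        have hvx : Bf a v x = 0 := by rw [← Bf_sym hsym x v]; exact hxv
        have hw : w = w0 + (Bf a x w / Bf a x x) • x := by rw [hw0]; abel
        rw [hw, Bf_add_right, h1, Bf_smul_right, hvx]; ring
      have hva : Matrix.vecMul v a = 0 := by
        funext k'
        have hδ := hvw (fun k => if k = k' then 1 else 0)
        simp only [Bf, mul_ite, mul_one, mul_zero, Finset.sum_ite_eq', Finset.mem_univ,
          if_true] at hδ
        show Matrix.vecMul v a k' = 0
        rw [Matrix.vecMul, dotProduct]
        rw [← hδ]
        exact Finset.sum_congr rfl fun i _ => by ring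
      have hvne : v ≠ 0 := by
        intro h; have := congrFun h k1; rw [hv1] at this; exact one_ne_zero this
      exact vecMul_ne_zero hdet hvne hva
    have hS0 : S = ∅ := by
      rw [Finset.eq_empty_iff_forall_notMem]
      intro α hα
      rw [hmemS] at hα
      have hbxa : Bf a x α = 0 := by
        have := hα.2
        rw [hQx] at this
        rcases mul_eq_zero.1 this with h' | h'
        · exact absurd h' h2
        · exact h'
      exact hj (hα.1.symm.trans (hiso α hbxa))
    rw [hS0]
    simp
end

section
/- Let d ≥ 2. There exists a constant C = C(d) > 0, independent of q, such that for every finite field F_q of odd characteristic, every non-degenerate quadratic form Q on F_q^d, every j ∈ F_q \ {0}, every subset E ⊆ S_j, and every z ∈ F_q^d, the number of pairs (x, y) ∈ E × E with x − y + z ∈ S_j is at most C ((#E)² q^{−1} + (#E) q^{(d−1)/2}). -/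
open Finset

set_option linter.unusedSectionVars false
set_option maxHeartbeats 1000000

namespace Stmt16Aux

variable {F : Type} [Field F] [Fintype F] [DecidableEq F] {d : ℕ}

/-- auxiliary dot product -/
def dot (a x : Fin d → F) : F := ∑ i, a i * x i

lemma dot_sub_right (a x y : Fin d → F) : dot a (x - y) = dot a x - dot a y := by
  simp [dot, mul_sub, Finset.sum_sub_distrib]

lemma dot_add_left (a b x : Fin d → F) : dot (a + b) x = dot a x + dot b x := by
  simp [dot, add_mul, Finset.sum_add_distrib]

lemma dot_smul_left (c : F) (a x : Fin d → F) : dot (c • a) x = c * dot a x := by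
  simp [dot, Finset.mul_sum, mul_assoc]

/-- the number of solutions of `dot a v = c` is independent of `c` -/
lemma card_dot_left_fiber (v : Fin d → F) (hv : v ≠ 0) (c : F) :
    (univ.filter fun a : Fin d → F => dot a v = c).card
      = (univ.filter fun a : Fin d → F => dot a v = 0).card := by
  obtain ⟨i₀, hi₀⟩ : ∃ i, v i ≠ 0 := by
    by_contra h
    push_neg at h
    exact hv (funext fun i => h i)
  set w : Fin d → F := fun i => if i = i₀ then (v i₀)⁻¹ else 0 with hw
  have hdw : dot w v = 1 := by
    rw [dot]
    rw [Finset.sum_eq_single i₀]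
    · simp [hw, inv_mul_cancel₀ hi₀]
    · intro b _ hb; simp [hw, hb]
    · simp
  apply Finset.card_bij' (fun a _ => a - c • w) (fun a _ => a + c • w)
  · intro a ha
    simp only [mem_filter, mem_univ, true_and] at ha ⊢
    have : dot (a - c • w) v = dot a v - c * dot w v := by
      rw [sub_eq_add_neg, dot_add_left]
      have : dot (-(c • w)) v = -(c * dot w v) := by
        rw [← neg_smul, dot_smul_left]; ring
      rw [this]; ring
    rw [this, ha, hdw]; ring
  · intro a ha
    simp only [mem_filter, mem_univ, true_and] at ha ⊢
    rw [dot_add_left, dot_smul_left, ha, hdw]; ring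
  · intro a _; abel
  · intro a _; abel

lemma card_dot_left_zero (hd : 1 ≤ d) (v : Fin d → F) (hv : v ≠ 0) :
    (univ.filter fun a : Fin d → F => dot a v = 0).card = Fintype.card F ^ (d - 1) := by
  have hcard : (Finset.univ : Finset (Fin d → F)).card = Fintype.card F ^ d := by
    simp [Fintype.card_fun]
  have hfib : (Finset.univ : Finset (Fin d → F)).card
      = ∑ c : F, (univ.filter fun a : Fin d → F => dot a v = c).card :=
    Finset.card_eq_sum_card_fiberwise (fun x _ => mem_univ _)
  have hconst : ∀ c : F, (univ.filter fun a : Fin d → F => dot a v = c).card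
      = (univ.filter fun a : Fin d → F => dot a v = 0).card :=
    card_dot_left_fiber v hv
  rw [hcard] at hfib
  have hmain : Fintype.card F ^ d
      = Fintype.card F * (univ.filter fun a : Fin d → F => dot a v = 0).card := by
    rw [hfib]
    simp [hconst, Finset.sum_const, Finset.card_univ, mul_comm]
  have hq : 0 < Fintype.card F := Fintype.card_pos
  have hpow : Fintype.card F ^ d = Fintype.card F * Fintype.card F ^ (d - 1) := by
    conv_lhs => rw [show d = 1 + (d - 1) by omega]
    rw [pow_add, pow_one]
  exact (Nat.eq_of_mul_eq_mul_left hq (by rw [← hmain, hpow])).symm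

lemma sum_card_filter_swap {α β : Type} (s : Finset α) (t : Finset β)
    (p : α → β → Prop) [∀ a b, Decidable (p a b)] :
    ∑ y ∈ t, (s.filter fun x => p x y).card = ∑ x ∈ s, (t.filter fun y => p x y).card := by
  simp_rw [Finset.card_filter]
  rw [Finset.sum_comm]

/-- `cnt P a b` counts points of `P` on the hyperplane `dot a x = b`. -/
def cnt (P : Finset (Fin d → F)) (a : Fin d → F) (b : F) : ℕ :=
  (P.filter fun x => dot a x = b).card

lemma sum_cnt (P : Finset (Fin d → F)) (a : Fin d → F) : ∑ b, cnt P a b = P.card :=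
  (Finset.card_eq_sum_card_fiberwise fun x _ => mem_univ (dot a x)).symm

lemma sum_cnt_sq (P : Finset (Fin d → F)) (a : Fin d → F) :
    ∑ b, (cnt P a b)^2 = ((P ×ˢ P).filter fun pr => dot a pr.1 = dot a pr.2).card := by
  have h : ∀ b : F, (((P ×ˢ P).filter fun pr => dot a pr.1 = dot a pr.2).filter
        fun pr => dot a pr.1 = b)
      = (P.filter fun x => dot a x = b) ×ˢ (P.filter fun x => dot a x = b) := by
    intro b; ext pr
    simp only [mem_filter, mem_product]
    constructor
    · rintro ⟨⟨⟨h1, h2⟩, h3⟩, h4⟩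
      exact ⟨⟨h1, h4⟩, h2, by rw [← h3, h4]⟩
    · rintro ⟨⟨h1, h4⟩, h2, h5⟩
      exact ⟨⟨⟨h1, h2⟩, by rw [h4, h5]⟩, h4⟩
  rw [Finset.card_eq_sum_card_fiberwise (f := fun pr => dot a pr.1) (t := univ)
    (fun x _ => mem_univ _)]
  refine Finset.sum_congr rfl fun b _ => ?_
  rw [h b, Finset.card_product, cnt, sq]

lemma card_diag (P : Finset (Fin d → F)) :
    ((P ×ˢ P).filter fun pr : (Fin d → F) × (Fin d → F) => pr.1 = pr.2).card = P.card := by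
  have h : ((P ×ˢ P).filter fun pr : (Fin d → F) × (Fin d → F) => pr.1 = pr.2)
      = P.image (fun x => (x, x)) := by
    ext pr
    simp only [mem_filter, mem_product, mem_image]
    constructor
    · rintro ⟨⟨h1, h2⟩, h3⟩
      exact ⟨pr.1, h1, Prod.ext rfl h3⟩
    · rintro ⟨x, hx, rfl⟩
      exact ⟨⟨hx, hx⟩, rfl⟩
  rw [h, Finset.card_image_of_injective _ (fun x y h => (Prod.mk.injEq _ _ _ _).mp h |>.1)]

lemma sum_nonzero_card (hd : 1 ≤ d) (P : Finset (Fin d → F)) :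
    ∑ a ∈ univ.filter (fun a : Fin d → F => a ≠ 0),
        ((P ×ˢ P).filter fun pr => dot a pr.1 = dot a pr.2).card
      = P.card * (Fintype.card F ^ d - 1)
        + (P.card * P.card - P.card) * (Fintype.card F ^ (d - 1) - 1) := by
  rw [sum_card_filter_swap (P ×ˢ P) (univ.filter (fun a : Fin d → F => a ≠ 0))
    (fun pr a => dot a pr.1 = dot a pr.2)]
  have hterm : ∀ pr : (Fin d → F) × (Fin d → F),
      ((univ.filter (fun a : Fin d → F => a ≠ 0)).filter
          fun a => dot a pr.1 = dot a pr.2).card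
        = if pr.1 = pr.2 then Fintype.card F ^ d - 1 else Fintype.card F ^ (d - 1) - 1 := by
    intro pr
    have hset : ((univ.filter (fun a : Fin d → F => a ≠ 0)).filter
          fun a => dot a pr.1 = dot a pr.2)
        = (univ.filter fun a : Fin d → F => dot a (pr.1 - pr.2) = 0).erase 0 := by
      ext a
      simp only [mem_filter, mem_univ, true_and, mem_erase, dot_sub_right, sub_eq_zero]
    rw [hset, Finset.card_erase_of_mem]
    · by_cases hpr : pr.1 = pr.2
      · simp only [hpr, if_true, sub_self]
        have h0 : (univ.filter fun a : Fin d → F => dot a (0 : Fin d → F) = 0) = univ := by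
          ext a; simp [dot]
        rw [h0, card_univ, Fintype.card_fun, Fintype.card_fin]
      · rw [if_neg hpr, card_dot_left_zero hd _ (sub_ne_zero.mpr hpr)]
    · simp [dot]
  rw [Finset.sum_congr rfl fun pr _ => hterm pr, Finset.sum_ite, Finset.sum_const,
    Finset.sum_const, smul_eq_mul, smul_eq_mul, card_diag]
  have h2 := Finset.card_filter_add_card_filter_not
    (s := P ×ˢ P) (p := fun pr : (Fin d → F) × (Fin d → F) => pr.1 = pr.2)
  rw [card_diag, Finset.card_product] at h2
  congr 1
  congr 1
  omega

lemma variance_bound (hd : 1 ≤ d) (P : Finset (Fin d → F)) :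
    ∑ a ∈ univ.filter (fun a : Fin d → F => a ≠ 0), ∑ b : F,
        ((cnt P a b : ℝ) - P.card / Fintype.card F)^2
      ≤ ((Fintype.card F : ℝ) - 1) * P.card * (Fintype.card F : ℝ) ^ (d - 1) := by
  set q : ℝ := (Fintype.card F : ℝ) with hqdef
  have hq2 : (2 : ℝ) ≤ q := by
    have := Fintype.one_lt_card (α := F)
    rw [hqdef]; exact_mod_cast this
  have hq0 : (0 : ℝ) < q := by linarith
  set Pc : ℝ := (P.card : ℝ) with hPc
  have hPc0 : 0 ≤ Pc := by positivity
  have hinner : ∀ a : Fin d → F,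
      ∑ b : F, ((cnt P a b : ℝ) - Pc / q)^2
        = (∑ b : F, ((cnt P a b : ℝ))^2) - Pc^2 / q := by
    intro a
    have h1 : ∑ b : F, (cnt P a b : ℝ) = Pc := by
      rw [hPc, ← Nat.cast_sum]
      exact_mod_cast congrArg (Nat.cast : ℕ → ℝ) (sum_cnt P a)
    have hcard : ((univ : Finset F).card : ℝ) = q := by rw [hqdef, card_univ]
    calc ∑ b : F, ((cnt P a b : ℝ) - Pc / q)^2
        = ∑ b : F, (((cnt P a b : ℝ))^2 - (2 * (Pc / q)) * (cnt P a b : ℝ) + (Pc / q)^2) := by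
          refine Finset.sum_congr rfl fun b _ => by ring
      _ = (∑ b : F, ((cnt P a b : ℝ))^2) - (2 * (Pc / q)) * (∑ b : F, (cnt P a b : ℝ))
            + ((univ : Finset F).card : ℝ) * (Pc / q)^2 := by
          rw [Finset.sum_add_distrib, Finset.sum_sub_distrib, ← Finset.mul_sum,
            Finset.sum_const, nsmul_eq_mul]
      _ = (∑ b : F, ((cnt P a b : ℝ))^2) - Pc^2 / q := by
          rw [h1, hcard]; field_simp; ring
  rw [Finset.sum_congr rfl fun a _ => hinner a, Finset.sum_sub_distrib, Finset.sum_const,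
    nsmul_eq_mul]
  have hA : (((univ : Finset (Fin d → F)).filter (fun a => a ≠ 0)).card : ℝ)
      = q ^ d - 1 := by
    rw [Finset.filter_ne', Finset.card_erase_of_mem (mem_univ _), card_univ, Fintype.card_fun,
      Fintype.card_fin]
    have h1 : 1 ≤ Fintype.card F ^ d := Nat.one_le_pow _ _ Fintype.card_pos
    push_cast [Nat.cast_sub h1]
    ring
  have hT : ∑ a ∈ univ.filter (fun a : Fin d → F => a ≠ 0),
        ∑ b : F, ((cnt P a b : ℝ))^2
      = Pc * (q ^ d - 1) + (Pc^2 - Pc) * (q ^ (d - 1) - 1) := by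
    have hcast : ∀ a : Fin d → F, ∑ b : F, ((cnt P a b : ℝ))^2
        = (((((P ×ˢ P).filter fun pr => dot a pr.1 = dot a pr.2)).card : ℕ) : ℝ) := by
      intro a
      rw [← sum_cnt_sq P a]
      push_cast
      rfl
    rw [Finset.sum_congr rfl fun a _ => hcast a, ← Nat.cast_sum, sum_nonzero_card hd P]
    have h1 : 1 ≤ Fintype.card F ^ d := Nat.one_le_pow _ _ Fintype.card_pos
    have h2 : 1 ≤ Fintype.card F ^ (d - 1) := Nat.one_le_pow _ _ Fintype.card_pos
    have h3 : P.card ≤ P.card * P.card := by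
      rcases Nat.eq_zero_or_pos P.card with h | h
      · simp [h]
      · calc P.card = P.card * 1 := (mul_one _).symm
          _ ≤ P.card * P.card := Nat.mul_le_mul_left _ h
    push_cast [Nat.cast_sub h1, Nat.cast_sub h2, Nat.cast_sub h3]
    ring
  rw [hT, hA]
  have hX1 : (1 : ℝ) ≤ q ^ (d - 1) := one_le_pow₀ (by linarith)
  set X : ℝ := q ^ (d - 1) with hX
  have hqd : q ^ d = q * X := by
    rw [hX, ← pow_succ']
    congr 1
    omega
  rw [hqd]
  have expand : (q - 1) * Pc * X
      - (Pc * (q * X - 1) + (Pc^2 - Pc) * (X - 1) - (q * X - 1) * (Pc^2 / q))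
      = Pc^2 * (q - 1) / q := by
    field_simp
    ring
  have hpos : 0 ≤ Pc^2 * (q - 1) / q :=
    div_nonneg (mul_nonneg (sq_nonneg Pc) (by linarith)) (le_of_lt hq0)
  linarith [expand, hpos]

/-- The key incidence estimate, via a second-moment (expander-mixing) argument.
`ι` indexes a family of affine hyperplanes `dot (A y) x = Bf y` whose scaling
orbits `(l • A y, l * Bf y)` hit each parameter pair at most `k` times. -/
lemma key {γ : Type} [DecidableEq γ] (hd : 1 ≤ d)
    (P : Finset (Fin d → F)) (ι : Finset γ) (A : γ → Fin d → F) (Bf : γ → F)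
    (hA : ∀ y ∈ ι, A y ≠ 0) (k : ℕ)
    (hfib : ∀ p : (Fin d → F) × F,
      ((ι ×ˢ (univ.filter fun l : F => l ≠ 0)).filter
        (fun yl => ((yl.2 • A yl.1, yl.2 * Bf yl.1) : (Fin d → F) × F) = p)).card ≤ k) :
    ∑ y ∈ ι, (cnt P (A y) (Bf y) : ℝ)
      ≤ ι.card * P.card / Fintype.card F
        + Real.sqrt ((k * ι.card * P.card : ℝ) * (Fintype.card F : ℝ) ^ (d - 1)) := by
  classical
  set q : ℝ := (Fintype.card F : ℝ) with hqdef
  have hq2 : (2 : ℝ) ≤ q := by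
    have := Fintype.one_lt_card (α := F)
    rw [hqdef]; exact_mod_cast this
  have hq1 : (0 : ℝ) < q - 1 := by linarith
  set Pc : ℝ := (P.card : ℝ) with hPcdef
  set X : ℝ := q ^ (d - 1) with hXdef
  have hX0 : (0 : ℝ) ≤ X := by positivity
  have hPc0 : (0 : ℝ) ≤ Pc := by positivity
  set dev : (Fin d → F) × F → ℝ := fun p => (cnt P p.1 p.2 : ℝ) - Pc / q with hdev
  have hinv : ∀ l : F, l ≠ 0 → ∀ a : Fin d → F, ∀ b : F,
      cnt P (l • a) (l * b) = cnt P a b := by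
    intro l hl a b
    unfold cnt
    congr 1
    apply Finset.filter_congr
    intro x _
    rw [dot_smul_left]
    constructor
    · exact fun h => mul_left_cancel₀ hl h
    · exact fun h => by rw [h]
  set Fs : Finset F := univ.filter (fun l : F => l ≠ 0) with hFs
  have hFscard : (Fs.card : ℝ) = q - 1 := by
    rw [hFs, Finset.filter_ne', Finset.card_erase_of_mem (mem_univ _), card_univ]
    have h1 : 1 ≤ Fintype.card F := Fintype.card_pos
    push_cast [Nat.cast_sub h1]
    ring
  have hSd : ∑ y ∈ ι, (dev (A y, Bf y))^2 ≤ (k : ℝ) * Pc * X := by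
    have hprod : ∑ yl ∈ ι ×ˢ Fs, (dev (yl.2 • A yl.1, yl.2 * Bf yl.1))^2
        = (q - 1) * ∑ y ∈ ι, (dev (A y, Bf y))^2 := by
      rw [Finset.sum_product]
      rw [Finset.mul_sum]
      refine Finset.sum_congr rfl fun y hy => ?_
      have hterm : ∀ l ∈ Fs, (dev (l • A y, l * Bf y))^2 = (dev (A y, Bf y))^2 := by
        intro l hl
        have hl0 : l ≠ 0 := by
          rw [hFs] at hl; exact (mem_filter.mp hl).2
        rw [hdev]
        simp only
        rw [hinv l hl0]
      rw [Finset.sum_congr rfl hterm, Finset.sum_const, nsmul_eq_mul, hFscard]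
    have hcomp : ∑ yl ∈ ι ×ˢ Fs, (dev (yl.2 • A yl.1, yl.2 * Bf yl.1))^2
        = ∑ p ∈ (ι ×ˢ Fs).image
            (fun yl : γ × F => ((yl.2 • A yl.1, yl.2 * Bf yl.1) : (Fin d → F) × F)),
            (((ι ×ˢ Fs).filter
              (fun yl => ((yl.2 • A yl.1, yl.2 * Bf yl.1) : (Fin d → F) × F) = p)).card)
              • (dev p)^2 :=
      Finset.sum_comp (fun p => (dev p)^2)
        (fun yl : γ × F => ((yl.2 • A yl.1, yl.2 * Bf yl.1) : (Fin d → F) × F))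
    have himg_sub : (ι ×ˢ Fs).image
          (fun yl : γ × F => ((yl.2 • A yl.1, yl.2 * Bf yl.1) : (Fin d → F) × F))
        ⊆ (univ.filter (fun a : Fin d → F => a ≠ 0)) ×ˢ (univ : Finset F) := by
      intro p hp
      obtain ⟨yl, hyl, rfl⟩ := Finset.mem_image.mp hp
      rw [Finset.mem_product] at hyl ⊢
      refine ⟨?_, mem_univ _⟩
      rw [mem_filter]
      refine ⟨mem_univ _, ?_⟩
      have hl0 : yl.2 ≠ 0 := by
        have := hyl.2; rw [hFs, mem_filter] at this; exact this.2
      exact smul_ne_zero hl0 (hA yl.1 hyl.1)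
    have hstep : ∑ yl ∈ ι ×ˢ Fs, (dev (yl.2 • A yl.1, yl.2 * Bf yl.1))^2
        ≤ (k : ℝ) * ((q - 1) * Pc * X) := by
      rw [hcomp]
      calc ∑ p ∈ (ι ×ˢ Fs).image
            (fun yl : γ × F => ((yl.2 • A yl.1, yl.2 * Bf yl.1) : (Fin d → F) × F)),
            (((ι ×ˢ Fs).filter
              (fun yl => ((yl.2 • A yl.1, yl.2 * Bf yl.1) : (Fin d → F) × F) = p)).card)
              • (dev p)^2
          ≤ ∑ p ∈ (ι ×ˢ Fs).image
            (fun yl : γ × F => ((yl.2 • A yl.1, yl.2 * Bf yl.1) : (Fin d → F) × F)),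
            (k : ℝ) * (dev p)^2 := by
            refine Finset.sum_le_sum fun p hp => ?_
            rw [nsmul_eq_mul]
            exact mul_le_mul_of_nonneg_right (by exact_mod_cast hfib p) (sq_nonneg _)
        _ ≤ ∑ p ∈ (univ.filter (fun a : Fin d → F => a ≠ 0)) ×ˢ (univ : Finset F),
              (k : ℝ) * (dev p)^2 := by
            refine Finset.sum_le_sum_of_subset_of_nonneg himg_sub fun p _ _ => by positivity
        _ = (k : ℝ) * ∑ p ∈ (univ.filter (fun a : Fin d → F => a ≠ 0)) ×ˢ (univ : Finset F),
              (dev p)^2 := by rw [Finset.mul_sum]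
        _ ≤ (k : ℝ) * ((q - 1) * Pc * X) := by
            refine mul_le_mul_of_nonneg_left ?_ (by positivity)
            calc ∑ p ∈ (univ.filter (fun a : Fin d → F => a ≠ 0)) ×ˢ (univ : Finset F),
                  (dev p)^2
                = ∑ a ∈ univ.filter (fun a : Fin d → F => a ≠ 0), ∑ b : F,
                    ((cnt P a b : ℝ) - Pc / q)^2 := by
                  rw [Finset.sum_product]
              _ ≤ (q - 1) * Pc * X := variance_bound hd P
    have h2 : (q - 1) * (∑ y ∈ ι, (dev (A y, Bf y))^2)
        ≤ (q - 1) * ((k : ℝ) * Pc * X) := by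
      rw [← hprod]
      calc ∑ yl ∈ ι ×ˢ Fs, (dev (yl.2 • A yl.1, yl.2 * Bf yl.1))^2
          ≤ (k : ℝ) * ((q - 1) * Pc * X) := hstep
        _ = (q - 1) * ((k : ℝ) * Pc * X) := by ring
    exact le_of_mul_le_mul_left h2 hq1
  have hcs : (∑ y ∈ ι, |dev (A y, Bf y)|)^2
      ≤ (ι.card : ℝ) * ∑ y ∈ ι, (dev (A y, Bf y))^2 := by
    have h := Finset.sum_mul_sq_le_sq_mul_sq ι (fun _ => (1 : ℝ))
      (fun y => |dev (A y, Bf y)|)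
    simpa [sq_abs] using h
  have h3 : (∑ y ∈ ι, |dev (A y, Bf y)|)^2
      ≤ ((k : ℝ) * ι.card * Pc) * X := by
    calc (∑ y ∈ ι, |dev (A y, Bf y)|)^2
        ≤ (ι.card : ℝ) * ∑ y ∈ ι, (dev (A y, Bf y))^2 := hcs
      _ ≤ (ι.card : ℝ) * ((k : ℝ) * Pc * X) :=
          mul_le_mul_of_nonneg_left hSd (by positivity)
      _ = ((k : ℝ) * ι.card * Pc) * X := by ring
  have h4 : ∑ y ∈ ι, |dev (A y, Bf y)| ≤ Real.sqrt (((k : ℝ) * ι.card * Pc) * X) := by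
    rw [Real.le_sqrt (Finset.sum_nonneg fun y _ => abs_nonneg _) (by positivity)]
    exact h3
  calc ∑ y ∈ ι, (cnt P (A y) (Bf y) : ℝ)
      = ∑ y ∈ ι, (Pc / q + dev (A y, Bf y)) := by
        refine Finset.sum_congr rfl fun y _ => ?_
        rw [hdev]; ring
    _ = ι.card * (Pc / q) + ∑ y ∈ ι, dev (A y, Bf y) := by
        rw [Finset.sum_add_distrib, Finset.sum_const, nsmul_eq_mul]
    _ ≤ ι.card * (Pc / q) + ∑ y ∈ ι, |dev (A y, Bf y)| := by
        refine add_le_add_right (Finset.sum_le_sum fun y _ => le_abs_self _) _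
    _ ≤ ι.card * (Pc / q) + Real.sqrt (((k : ℝ) * ι.card * Pc) * X) :=
        add_le_add_right h4 _
    _ = ι.card * P.card / Fintype.card F
        + Real.sqrt ((k * ι.card * P.card : ℝ) * (Fintype.card F : ℝ) ^ (d - 1)) := by
        rw [mul_div_assoc]

/-- the quadratic form -/
def Qv (a : Matrix (Fin d) (Fin d) F) (w : Fin d → F) : F := ∑ i, ∑ k, a i k * w i * w k

/-- normal vector of the hyperplane (in `x`) associated to `y` -/
def A1 (a : Matrix (Fin d) (Fin d) F) (z y : Fin d → F) : Fin d → F :=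
  (2 : F) • a.mulVec (y - z)

/-- normal vector of the hyperplane (in `y`) associated to `x` -/
def A2 (a : Matrix (Fin d) (Fin d) F) (x : Fin d → F) : Fin d → F :=
  (2 : F) • a.transpose.mulVec x

lemma qf_sub (a : Matrix (Fin d) (Fin d) F) (hsym : ∀ i k, a i k = a k i) (x w : Fin d → F) :
    Qv a (x - w) = Qv a x - dot ((2:F) • a.mulVec w) x + Qv a w := by
  unfold Qv
  have hdot : dot ((2:F) • a.mulVec w) x = ∑ i, ∑ k, 2 * (a i k * x i * w k) := by
    unfold dot
    refine Finset.sum_congr rfl fun i _ => ?_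
    simp only [Pi.smul_apply, smul_eq_mul, Matrix.mulVec, dotProduct]
    rw [Finset.mul_sum, Finset.sum_mul]
    refine Finset.sum_congr rfl fun k _ => by ring
  have hcross : ∑ i, ∑ k, a i k * w i * x k = ∑ i, ∑ k, a i k * x i * w k := by
    rw [Finset.sum_comm]
    refine Finset.sum_congr rfl fun u _ => Finset.sum_congr rfl fun t _ => ?_
    rw [hsym t u]; ring
  have hexp : (∑ i, ∑ k, a i k * (x - w) i * (x - w) k)
      = (∑ i, ∑ k, a i k * x i * x k) - (∑ i, ∑ k, a i k * x i * w k)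
        - (∑ i, ∑ k, a i k * w i * x k) + ∑ i, ∑ k, a i k * w i * w k := by
    simp only [Pi.sub_apply, ← Finset.sum_sub_distrib, ← Finset.sum_add_distrib]
    refine Finset.sum_congr rfl fun i _ => Finset.sum_congr rfl fun k _ => by ring
  rw [hexp, hcross, hdot]
  have h2 : ∑ i, ∑ k, 2 * (a i k * x i * w k)
      = (∑ i, ∑ k, a i k * x i * w k) + (∑ i, ∑ k, a i k * x i * w k) := by
    rw [← Finset.sum_add_distrib]
    refine Finset.sum_congr rfl fun i _ => ?_
    rw [← Finset.sum_add_distrib]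
    exact Finset.sum_congr rfl fun k _ => by ring
  rw [h2]
  ring

lemma dot_swap (a : Matrix (Fin d) (Fin d) F) (x w : Fin d → F) :
    dot ((2:F) • a.mulVec w) x = dot ((2:F) • a.transpose.mulVec x) w := by
  unfold dot
  have h1 : ∀ i, ((2:F) • a.mulVec w) i * x i = ∑ k, 2 * (a i k * w k * x i) := by
    intro i
    simp only [Pi.smul_apply, smul_eq_mul, Matrix.mulVec, dotProduct]
    rw [Finset.mul_sum, Finset.sum_mul]
    refine Finset.sum_congr rfl fun k _ => by ring
  have h2 : ∀ k, ((2:F) • a.transpose.mulVec x) k * w k = ∑ i, 2 * (a i k * w k * x i) := by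
    intro k
    simp only [Pi.smul_apply, smul_eq_mul, Matrix.mulVec, dotProduct,
      Matrix.transpose_apply]
    rw [Finset.mul_sum, Finset.sum_mul]
    refine Finset.sum_congr rfl fun i _ => by ring
  rw [Finset.sum_congr rfl fun i _ => h1 i, Finset.sum_congr rfl fun k _ => h2 k,
    Finset.sum_comm]

lemma qv_smul (a : Matrix (Fin d) (Fin d) F) (c : F) (w : Fin d → F) :
    Qv a (c • w) = c^2 * Qv a w := by
  unfold Qv
  rw [Finset.mul_sum]
  refine Finset.sum_congr rfl fun i _ => ?_
  rw [Finset.mul_sum]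
  refine Finset.sum_congr rfl fun k _ => ?_
  simp only [Pi.smul_apply, smul_eq_mul]
  ring

lemma smul_A1 (a : Matrix (Fin d) (Fin d) F) (z y : Fin d → F) (l : F) :
    l • A1 a z y = a.mulVec ((l * 2) • (y - z)) := by
  rw [A1, smul_smul, Matrix.mulVec_smul]

lemma smul_A2 (a : Matrix (Fin d) (Fin d) F) (x : Fin d → F) (l : F) :
    l • A2 a x = a.transpose.mulVec ((l * 2) • x) := by
  rw [A2, smul_smul, Matrix.mulVec_smul]

end Stmt16Aux

open Stmt16Aux in
/-- Incidence theorem: for `E ⊆ S_j` and any `z ∈ F_q^d`, the number of pairs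
`(x,y) ∈ E × E` with `x - y + z ∈ S_j` is at most `C((#E)² q⁻¹ + #E q^{(d-1)/2})`. -/
theorem stmt16 (d : ℕ) (hd : 2 ≤ d) :
    ∃ C : ℝ, 0 < C ∧
      ∀ (F : Type) [Field F] [Fintype F] [DecidableEq F],
        Odd (ringChar F) →
        ∀ a : Matrix (Fin d) (Fin d) F, (∀ i k, a i k = a k i) → a.det ≠ 0 →
        ∀ j : F, j ≠ 0 →
        ∀ E : Finset (Fin d → F), E ⊆ Surf a j →
        ∀ z : Fin d → F,
          (((E ×ˢ E).filter (fun pr => pr.1 - pr.2 + z ∈ Surf a j)).card : ℝ)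
            ≤ C * ((E.card : ℝ) ^ 2 * (Fintype.card F : ℝ)⁻¹ +
                (E.card : ℝ) * (Fintype.card F : ℝ) ^ (((d : ℝ) - 1) / 2)) := by
  refine ⟨4, by norm_num, ?_⟩
  intro F _ _ _ hodd a hsym hdet j hj E hE z
  classical
  have hd1 : 1 ≤ d := by omega
  have h2ne : (2 : F) ≠ 0 := by
    refine Ring.two_ne_zero fun h => ?_
    rw [h] at hodd
    exact absurd (Nat.odd_iff.mp hodd) (by norm_num)
  have hq1 : 1 < Fintype.card F := Fintype.one_lt_card
  have hq0 : (0 : ℝ) < (Fintype.card F : ℝ) := by positivity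
  -- membership facts
  have hmem : ∀ x : Fin d → F, x ∈ Surf a j ↔ Qv a x = j := by
    intro x
    rw [Surf, mem_filter]
    simp only [mem_univ, true_and]
    rfl
  have hQE : ∀ x ∈ E, Qv a x = j := fun x hx => (hmem x).mp (hE hx)
  have hEne0 : ∀ x ∈ E, x ≠ (0 : Fin d → F) := by
    intro x hx h0
    refine hj ?_
    rw [← hQE x hx, h0]
    simp [Qv]
  -- injectivity of mulVec
  have hmvinj : Function.Injective a.mulVec := by
    intro u v h
    have h1 : a.mulVec (u - v) = 0 := by rw [Matrix.mulVec_sub, h, sub_self]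
    by_contra hne
    exact hdet (Matrix.exists_mulVec_eq_zero_iff.mp ⟨u - v, sub_ne_zero.mpr hne, h1⟩)
  have hmvTinj : Function.Injective a.transpose.mulVec := by
    intro u v h
    have h1 : a.transpose.mulVec (u - v) = 0 := by rw [Matrix.mulVec_sub, h, sub_self]
    by_contra hne
    refine hdet ?_
    have := Matrix.exists_mulVec_eq_zero_iff.mp ⟨u - v, sub_ne_zero.mpr hne, h1⟩
    rwa [Matrix.det_transpose] at this
  -- rewriting the incidence condition as a hyperplane condition in x
  have hfilter1 : ∀ y : Fin d → F,
      E.filter (fun x => x - y + z ∈ Surf a j)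
        = E.filter (fun x => dot (A1 a z y) x = Qv a (y - z)) := by
    intro y
    apply Finset.filter_congr
    intro x hx
    have hxq : Qv a x = j := hQE x hx
    have hxyz : x - y + z = x - (y - z) := by abel
    rw [hmem, hxyz, qf_sub a hsym x (y - z), hxq]
    have hA1eq : dot (A1 a z y) x = dot ((2:F) • a.mulVec (y - z)) x := rfl
    rw [hA1eq]
    constructor
    · intro h; linear_combination -h
    · intro h; linear_combination -h
  -- decomposition of E
  set E0 : Finset (Fin d → F) := E.filter (fun y => y = z) with hE0
  set Erest : Finset (Fin d → F) := E.filter (fun y => ¬ y = z) with hErest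
  set E1 : Finset (Fin d → F) := Erest.filter (fun y => Qv a (y - z) ≠ 0) with hE1def
  set E2 : Finset (Fin d → F) := Erest.filter (fun y => ¬ Qv a (y - z) ≠ 0) with hE2def
  have hnu : ((E ×ˢ E).filter (fun pr => pr.1 - pr.2 + z ∈ Surf a j)).card
      = ∑ y ∈ E, (E.filter (fun x => x - y + z ∈ Surf a j)).card := by
    rw [Finset.card_filter, Finset.sum_product_right]
    exact Finset.sum_congr rfl fun y _ => (Finset.card_filter _ _).symm
  have hsplit : ∑ y ∈ E, (E.filter (fun x => x - y + z ∈ Surf a j)).card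
      = (∑ y ∈ E0, (E.filter (fun x => x - y + z ∈ Surf a j)).card)
        + ((∑ y ∈ E1, (E.filter (fun x => x - y + z ∈ Surf a j)).card)
          + (∑ y ∈ E2, (E.filter (fun x => x - y + z ∈ Surf a j)).card)) := by
    rw [← Finset.sum_filter_add_sum_filter_not E (fun y => y = z)]
    congr 1
    rw [← Finset.sum_filter_add_sum_filter_not Erest (fun y => Qv a (y - z) ≠ 0)]
  -- T0
  have hT0 : ∑ y ∈ E0, (E.filter (fun x => x - y + z ∈ Surf a j)).card ≤ E.card := by
    have h1 : E0.card ≤ 1 := by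
      rw [hE0, Finset.filter_eq']
      split
      · simp
      · simp
    calc ∑ y ∈ E0, (E.filter (fun x => x - y + z ∈ Surf a j)).card
        ≤ ∑ _y ∈ E0, E.card := Finset.sum_le_sum fun y _ => Finset.card_filter_le _ _
      _ = E0.card * E.card := by rw [Finset.sum_const, smul_eq_mul]
      _ ≤ 1 * E.card := Nat.mul_le_mul_right _ h1
      _ = E.card := one_mul _
  -- T1 via key with k = 1
  have hT1nat : ∑ y ∈ E1, (E.filter (fun x => x - y + z ∈ Surf a j)).card
      = ∑ y ∈ E1, cnt E (A1 a z y) (Qv a (y - z)) :=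
    Finset.sum_congr rfl fun y _ => by rw [hfilter1 y]; rfl
  have hA1ne : ∀ y ∈ E1, A1 a z y ≠ 0 := by
    intro y hy h0
    have hyz : y ≠ z := by
      rw [hE1def, mem_filter, hErest, mem_filter] at hy
      exact hy.1.2
    rcases smul_eq_zero.mp h0 with h | h
    · exact h2ne h
    · have := hmvinj (h.trans (Matrix.mulVec_zero a).symm)
      exact hyz (sub_eq_zero.mp this)
  have hfib1 : ∀ p : (Fin d → F) × F,
      ((E1 ×ˢ (univ.filter fun l : F => l ≠ 0)).filter
        (fun yl => ((yl.2 • A1 a z yl.1, yl.2 * Qv a (yl.1 - z)) : (Fin d → F) × F) = p)).card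
        ≤ 1 := by
    intro p
    rw [Finset.card_le_one]
    rintro ⟨y, l⟩ hu ⟨y', l'⟩ hv
    rw [mem_filter, mem_product] at hu hv
    obtain ⟨⟨hy, hl⟩, hup⟩ := hu
    obtain ⟨⟨hy', hl'⟩, hvp⟩ := hv
    have hl0 : l ≠ 0 := (mem_filter.mp hl).2
    have hl0' : l' ≠ 0 := (mem_filter.mp hl').2
    have heq := hup.trans hvp.symm
    have h1 : l • A1 a z y = l' • A1 a z y' := congrArg Prod.fst heq
    have h2 : l * Qv a (y - z) = l' * Qv a (y' - z) := congrArg Prod.snd heq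
    rw [smul_A1, smul_A1] at h1
    have h3 : (l * 2) • (y - z) = (l' * 2) • (y' - z) := hmvinj h1
    have h4 : l • (y - z) = l' • (y' - z) := by
      apply smul_right_injective (Fin d → F) h2ne
      calc (2:F) • l • (y - z) = (l * 2) • (y - z) := by rw [smul_smul, mul_comm]
        _ = (l' * 2) • (y' - z) := h3
        _ = (2:F) • l' • (y' - z) := by rw [smul_smul, mul_comm]
    have h5 : Qv a (l • (y - z)) = Qv a (l' • (y' - z)) := congrArg (Qv a) h4
    rw [qv_smul, qv_smul] at h5
    have hQy' : Qv a (y' - z) ≠ 0 := by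
      rw [hE1def, mem_filter] at hy'
      exact hy'.2
    have hll : l = l' := by
      have h6 : l * (l' * Qv a (y' - z)) = l' * (l' * Qv a (y' - z)) := by
        linear_combination h5 - l * h2
      exact mul_right_cancel₀ (mul_ne_zero hl0' hQy') h6
    subst hll
    have h7 : y - z = y' - z := smul_right_injective (Fin d → F) hl0 h4
    have h8 : y = y' := by
      have := congrArg (· + z) h7
      simpa using this
    rw [h8]
  have hkey1 := key hd1 E E1 (fun y => A1 a z y) (fun y => Qv a (y - z)) hA1ne 1 hfib1
  -- T2 via key with k = 2
  have hstep2 : ∀ y ∈ E2, E.filter (fun x => x - y + z ∈ Surf a j)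
      = E.filter (fun x => dot (A2 a x) y = dot (A2 a x) z) := by
    intro y hy
    have hQy : Qv a (y - z) = 0 := by
      rw [hE2def, mem_filter] at hy
      exact not_not.mp hy.2
    rw [hfilter1 y]
    apply Finset.filter_congr
    intro x _
    rw [hQy]
    have hsw : dot (A1 a z y) x = dot (A2 a x) y - dot (A2 a x) z := by
      calc dot (A1 a z y) x = dot ((2:F) • a.transpose.mulVec x) (y - z) :=
            dot_swap a x (y - z)
        _ = dot (A2 a x) (y - z) := rfl
        _ = dot (A2 a x) y - dot (A2 a x) z := dot_sub_right _ _ _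
    rw [hsw]
    exact sub_eq_zero
  have hfilter2 : ∑ y ∈ E2, (E.filter (fun x => x - y + z ∈ Surf a j)).card
      = ∑ x ∈ E, cnt E2 (A2 a x) (dot (A2 a x) z) := by
    rw [Finset.sum_congr rfl (fun y hy => congrArg Finset.card (hstep2 y hy))]
    exact sum_card_filter_swap E E2 (fun x y => dot (A2 a x) y = dot (A2 a x) z)
  have hA2ne : ∀ x ∈ E, A2 a x ≠ 0 := by
    intro x hx h0
    rcases smul_eq_zero.mp h0 with h | h
    · exact h2ne h
    · have := hmvTinj (h.trans (Matrix.mulVec_zero _).symm)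
      exact hEne0 x hx this
  have hfib2 : ∀ p : (Fin d → F) × F,
      ((E ×ˢ (univ.filter fun l : F => l ≠ 0)).filter
        (fun yl => ((yl.2 • A2 a yl.1, yl.2 * dot (A2 a yl.1) z) : (Fin d → F) × F) = p)).card
        ≤ 2 := by
    intro p
    rcases Finset.eq_empty_or_nonempty ((E ×ˢ (univ.filter fun l : F => l ≠ 0)).filter
        (fun yl => ((yl.2 • A2 a yl.1, yl.2 * dot (A2 a yl.1) z) : (Fin d → F) × F) = p))
      with h | ⟨⟨x0, l0⟩, h0⟩
    · rw [h]; simp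
    · rw [mem_filter, mem_product] at h0
      obtain ⟨⟨hx0, hl0mem⟩, h0p⟩ := h0
      have hl00 : l0 ≠ 0 := (mem_filter.mp hl0mem).2
      have hsub : ((E ×ˢ (univ.filter fun l : F => l ≠ 0)).filter
          (fun yl => ((yl.2 • A2 a yl.1, yl.2 * dot (A2 a yl.1) z) : (Fin d → F) × F) = p))
          ⊆ insert (x0, l0) {(-x0, -l0)} := by
        rintro ⟨x, l⟩ hxl
        rw [mem_filter, mem_product] at hxl
        obtain ⟨⟨hx, hlmem⟩, hp⟩ := hxl
        have hl0 : l ≠ 0 := (mem_filter.mp hlmem).2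
        have heq := hp.trans h0p.symm
        have h1 : l • A2 a x = l0 • A2 a x0 := congrArg Prod.fst heq
        rw [smul_A2, smul_A2] at h1
        have h3 : (l * 2) • x = (l0 * 2) • x0 := hmvTinj h1
        have h4 : l • x = l0 • x0 := by
          apply smul_right_injective (Fin d → F) h2ne
          calc (2:F) • l • x = (l * 2) • x := by rw [smul_smul, mul_comm]
            _ = (l0 * 2) • x0 := h3
            _ = (2:F) • l0 • x0 := by rw [smul_smul, mul_comm]
        have h5 : Qv a (l • x) = Qv a (l0 • x0) := congrArg (Qv a) h4
        rw [qv_smul, qv_smul, hQE x hx, hQE x0 hx0] at h5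
        have hsq : l ^ 2 = l0 ^ 2 := mul_right_cancel₀ hj h5
        have hfact : (l - l0) * (l + l0) = 0 := by linear_combination hsq
        rcases mul_eq_zero.mp hfact with h | h
        · have hll : l = l0 := sub_eq_zero.mp h
          subst hll
          have hxx : x = x0 := smul_right_injective (Fin d → F) hl0 h4
          rw [hxx]
          exact Finset.mem_insert_self _ _
        · have hll : l = -l0 := eq_neg_of_add_eq_zero_left h
          have hxx : x = -x0 := by
            apply smul_right_injective (Fin d → F) hl0
            show l • x = l • (-x0)
            rw [h4, hll, neg_smul, smul_neg, neg_neg]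
          rw [hxx, hll]
          exact Finset.mem_insert_of_mem (Finset.mem_singleton_self _)
      calc ((E ×ˢ (univ.filter fun l : F => l ≠ 0)).filter
          (fun yl => ((yl.2 • A2 a yl.1, yl.2 * dot (A2 a yl.1) z) : (Fin d → F) × F) = p)).card
          ≤ (insert (x0, l0) ({(-x0, -l0)} : Finset ((Fin d → F) × F))).card :=
            Finset.card_le_card hsub
        _ ≤ 2 := by
            refine le_trans (Finset.card_insert_le _ _) ?_
            simp
  have hkey2 := key hd1 E2 E (fun x => A2 a x) (fun x => dot (A2 a x) z) hA2ne 2 hfib2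
  -- assemble; real number abbreviations are kept as explicit casts
  have he1le : E1.card ≤ E.card :=
    Finset.card_le_card (le_trans (Finset.filter_subset _ _) (Finset.filter_subset _ _))
  have he2le : E2.card ≤ E.card :=
    Finset.card_le_card (le_trans (Finset.filter_subset _ _) (Finset.filter_subset _ _))
  have he0 : (0 : ℝ) ≤ (E.card : ℝ) := by positivity
  have hXr0 : (0 : ℝ) ≤ (Fintype.card F : ℝ) ^ (d - 1) := by positivity
  have hsr0 : (0 : ℝ) ≤ Real.sqrt ((Fintype.card F : ℝ) ^ (d - 1)) := Real.sqrt_nonneg _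
  have hsr1 : (1 : ℝ) ≤ Real.sqrt ((Fintype.card F : ℝ) ^ (d - 1)) := by
    rw [show (1:ℝ) = Real.sqrt 1 by rw [Real.sqrt_one]]
    apply Real.sqrt_le_sqrt
    exact one_le_pow₀ (by exact_mod_cast hq1.le)
  -- bound the three partial sums, as reals
  have hb0R : ((∑ y ∈ E0, (E.filter (fun x => x - y + z ∈ Surf a j)).card : ℕ) : ℝ)
      ≤ (E.card : ℝ) := by exact_mod_cast hT0
  have hb1R : ((∑ y ∈ E1, (E.filter (fun x => x - y + z ∈ Surf a j)).card : ℕ) : ℝ)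
      ≤ (E.card : ℝ) * (E.card : ℝ) / (Fintype.card F : ℝ)
        + (E.card : ℝ) * Real.sqrt ((Fintype.card F : ℝ) ^ (d - 1)) := by
    rw [hT1nat]
    push_cast
    refine le_trans hkey1 (add_le_add ?_ ?_)
    · gcongr
    · refine le_trans (Real.sqrt_le_sqrt
        (y := ((E.card : ℝ) * (E.card : ℝ)) * ((Fintype.card F : ℝ) ^ (d - 1))) ?_) ?_
      · have h1 : ((1:ℕ) : ℝ) * (E1.card : ℝ) * (E.card : ℝ) ≤ (E.card : ℝ) * (E.card : ℝ) := by
          push_cast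
          have hle : (E1.card : ℝ) ≤ (E.card : ℝ) := by exact_mod_cast he1le
          nlinarith [he0]
        exact mul_le_mul_of_nonneg_right h1 hXr0
      · rw [show (E.card : ℝ) * (E.card : ℝ) * ((Fintype.card F : ℝ) ^ (d - 1))
            = ((E.card : ℝ) * Real.sqrt ((Fintype.card F : ℝ) ^ (d - 1)))^2 by
            rw [mul_pow, Real.sq_sqrt hXr0]; ring]
        rw [Real.sqrt_sq (by positivity)]
  have hb2R : ((∑ y ∈ E2, (E.filter (fun x => x - y + z ∈ Surf a j)).card : ℕ) : ℝ)
      ≤ (E.card : ℝ) * (E.card : ℝ) / (Fintype.card F : ℝ)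
        + 2 * ((E.card : ℝ) * Real.sqrt ((Fintype.card F : ℝ) ^ (d - 1))) := by
    rw [hfilter2]
    push_cast
    refine le_trans hkey2 (add_le_add ?_ ?_)
    · gcongr
    · refine le_trans (Real.sqrt_le_sqrt
        (y := (4 * ((E.card : ℝ) * (E.card : ℝ))) * ((Fintype.card F : ℝ) ^ (d - 1))) ?_) ?_
      · have h1 : ((2:ℕ) : ℝ) * (E.card : ℝ) * (E2.card : ℝ)
            ≤ 4 * ((E.card : ℝ) * (E.card : ℝ)) := by
          push_cast
          have hle : (E2.card : ℝ) ≤ (E.card : ℝ) := by exact_mod_cast he2le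
          nlinarith [he0]
        exact mul_le_mul_of_nonneg_right h1 hXr0
      · rw [show (4 * ((E.card : ℝ) * (E.card : ℝ))) * ((Fintype.card F : ℝ) ^ (d - 1))
            = (2 * ((E.card : ℝ) * Real.sqrt ((Fintype.card F : ℝ) ^ (d - 1))))^2 by
            rw [mul_pow, mul_pow, Real.sq_sqrt hXr0]; ring]
        rw [Real.sqrt_sq (by positivity)]
  -- total
  have hnuR : (((E ×ˢ E).filter (fun pr => pr.1 - pr.2 + z ∈ Surf a j)).card : ℝ)
      = ((∑ y ∈ E0, (E.filter (fun x => x - y + z ∈ Surf a j)).card : ℕ) : ℝ)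
        + (((∑ y ∈ E1, (E.filter (fun x => x - y + z ∈ Surf a j)).card : ℕ) : ℝ)
          + ((∑ y ∈ E2, (E.filter (fun x => x - y + z ∈ Surf a j)).card : ℕ) : ℝ)) := by
    rw [hnu, hsplit]
    push_cast
    ring
  -- identify the rpow with the sqrt
  have hrpow : (Fintype.card F : ℝ) ^ (((d : ℝ) - 1) / 2)
      = Real.sqrt ((Fintype.card F : ℝ) ^ (d - 1)) := by
    rw [Real.sqrt_eq_rpow, ← Real.rpow_natCast (Fintype.card F : ℝ) (d - 1),
      ← Real.rpow_mul hq0.le]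
    congr 1
    rw [Nat.cast_sub hd1]
    push_cast
    ring
  rw [hrpow]
  have hesr : (E.card : ℝ) ≤ (E.card : ℝ) * Real.sqrt ((Fintype.card F : ℝ) ^ (d - 1)) := by
    calc (E.card : ℝ) = (E.card : ℝ) * 1 := (mul_one _).symm
      _ ≤ (E.card : ℝ) * Real.sqrt ((Fintype.card F : ℝ) ^ (d - 1)) :=
          mul_le_mul_of_nonneg_left hsr1 he0
  have hrw : (E.card : ℝ) ^ 2 * (Fintype.card F : ℝ)⁻¹
      = (E.card : ℝ) * (E.card : ℝ) / (Fintype.card F : ℝ) := by ring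
  rw [hrw]
  have hdivnn : (0:ℝ) ≤ (E.card : ℝ) * (E.card : ℝ) / (Fintype.card F : ℝ) := by positivity
  linarith [hnuR, hb0R, hb1R, hb2R, hesr, hdivnn]
end
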